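/- arXiv:2507.06491 — 7 statements merged into one kernel-verified Lean document; each statement's English description precedes it below -/
import Mathlib

section
/- Let a, b : [0,∞) → ℝ be continuous with a(t) ≥ a_min for all t ≥ 0, where a_min > 0 is a constant. Let y1, y2 : [0,∞) → ℝ be differentiable with 0 < y1(t) ≤ M and 0 < y2(t) ≤ M for all t ≥ 0 for some constant M > 0, and suppose y1′(t) = y1(t)(a(t) − b(t)·y1(t)) and y2′(t) = y2(t)(a(t) − b(t)·y2(t)) for all t ≥ 0. Then y1(t) − y2(t) → 0 as t → ∞. -/
open Filter

/-- Two positive bounded solutions of the time-dependent logistic equation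
`y' = y (a(t) - b(t) y)` with `a(t) ≥ a_min > 0` are asymptotic: `y1(t) - y2(t) → 0`. -/
theorem logistic_solutions_asymptotic
    (a b : ℝ → ℝ) (aMin : ℝ) (haMin : 0 < aMin)
    (ha : ContinuousOn a (Set.Ici 0)) (hb : ContinuousOn b (Set.Ici 0))
    (ha_lb : ∀ t, 0 ≤ t → aMin ≤ a t)
    (M : ℝ) (hM : 0 < M)
    (y1 y2 : ℝ → ℝ)
    (hy1pos : ∀ t, 0 ≤ t → 0 < y1 t) (hy1ub : ∀ t, 0 ≤ t → y1 t ≤ M)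
    (hy2pos : ∀ t, 0 ≤ t → 0 < y2 t) (hy2ub : ∀ t, 0 ≤ t → y2 t ≤ M)
    (hd1 : ∀ t, 0 ≤ t → HasDerivWithinAt y1 (y1 t * (a t - b t * y1 t)) (Set.Ici 0) t)
    (hd2 : ∀ t, 0 ≤ t → HasDerivWithinAt y2 (y2 t * (a t - b t * y2 t)) (Set.Ici 0) t) :
    Tendsto (fun t => y1 t - y2 t) atTop (nhds 0) := by
  set u : ℝ → ℝ := fun t => (y1 t)⁻¹ - (y2 t)⁻¹ with hu_def
  set A : ℝ → ℝ := fun t => ∫ s in (0:ℝ)..t, a s with hA_def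
  -- interval integrability of a on [0,t]
  have haint : ∀ t : ℝ, 0 ≤ t → IntervalIntegrable a MeasureTheory.volume 0 t := by
    intro t ht
    apply ContinuousOn.intervalIntegrable
    apply ha.mono
    rw [Set.uIcc_of_le ht]
    exact Set.Icc_subset_Ici_self
  -- derivative of u
  have hu_deriv : ∀ t, 0 ≤ t → HasDerivWithinAt u (-(a t) * u t) (Set.Ici 0) t := by
    intro t ht
    have hy1 : y1 t ≠ 0 := (hy1pos t ht).ne'
    have hy2 : y2 t ≠ 0 := (hy2pos t ht).ne'
    have h1 := (hd1 t ht).inv hy1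
    have h2 := (hd2 t ht).inv hy2
    have key : ∀ at' bt v1 v2 : ℝ, v1 ≠ 0 → v2 ≠ 0 →
        -at' * (v1⁻¹ - v2⁻¹)
          = (-(v1 * (at' - bt * v1)) / v1 ^ 2) - (-(v2 * (at' - bt * v2)) / v2 ^ 2) := by
      intro at' bt v1 v2 h1 h2
      field_simp
      ring
    rw [hu_def]
    simp only
    rw [key (a t) (b t) (y1 t) (y2 t) hy1 hy2]
    exact h1.sub h2
  -- derivative of A within Ici x at x, for x ≥ 0
  have hA_deriv : ∀ x : ℝ, 0 ≤ x → HasDerivWithinAt A (a x) (Set.Ici x) x := by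
    intro x hx
    exact intervalIntegral.integral_hasDerivWithinAt_right (haint x hx)
      ((ha.mono (fun y hy => le_trans hx (le_of_lt hy))).stronglyMeasurableAtFilter_nhdsWithin
        measurableSet_Ioi x)
      ((ha x hx).mono (fun y (hy : y ∈ Set.Ioi x) => le_trans hx (le_of_lt hy)))
  -- g is constant
  have hg_deriv : ∀ x : ℝ, 0 ≤ x →
      HasDerivWithinAt (fun t => u t * Real.exp (A t)) 0 (Set.Ici x) x := by
    intro x hx
    have h1 := (hu_deriv x hx).mono (Set.Ici_subset_Ici.2 hx)
    have h2 := ((hA_deriv x hx).exp)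
    have : HasDerivWithinAt (fun t => u t * Real.exp (A t))
        (-a x * u x * Real.exp (A x) + u x * (Real.exp (A x) * a x)) (Set.Ici x) x := h1.mul h2
    convert this using 1
    ring
  have hg_const : ∀ t : ℝ, 0 ≤ t → u t * Real.exp (A t) = u 0 * Real.exp (A 0) := by
    intro t ht
    have hAcont : ContinuousOn A (Set.Icc 0 t) := by
      have h := intervalIntegral.continuousOn_primitive_interval'
        (haint t ht) (Set.left_mem_uIcc (a := (0:ℝ)) (b := t))
      rwa [Set.uIcc_of_le ht] at h
    have hucont : ContinuousOn u (Set.Icc 0 t) := fun x hx =>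
      ((hu_deriv x hx.1).continuousWithinAt).mono
        (fun y hy => Set.mem_Ici.2 hy.1)
    have hcont : ContinuousOn (fun t => u t * Real.exp (A t)) (Set.Icc 0 t) :=
      hucont.mul (Real.continuous_exp.comp_continuousOn hAcont)
    exact constant_of_has_deriv_right_zero hcont
      (fun x hx => hg_deriv x hx.1) t ⟨ht, le_refl t⟩
  -- hence u t = u 0 * exp (A 0 - A t), and A t ≥ aMin * t
  have hA0 : A 0 = 0 := by simp [hA_def]
  have hA_lb : ∀ t : ℝ, 0 ≤ t → aMin * t ≤ A t := by
    intro t ht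
    have : ∫ s in (0:ℝ)..t, aMin ≤ ∫ s in (0:ℝ)..t, a s := by
      apply intervalIntegral.integral_mono_on ht (intervalIntegrable_const) (haint t ht)
      intro x hx
      exact ha_lb x hx.1
    simpa [mul_comm] using this
  have hu_bound : ∀ t : ℝ, 0 ≤ t → |u t| ≤ |u 0| * Real.exp (-(aMin * t)) := by
    intro t ht
    have h := hg_const t ht
    have hexp : Real.exp (A t) > 0 := Real.exp_pos _
    have hut : u t = u 0 * Real.exp (-(A t)) := by
      have h2 : u t * Real.exp (A t) * Real.exp (-(A t))
          = u 0 * Real.exp (A 0) * Real.exp (-(A t)) := by rw [h]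
      rwa [mul_assoc, ← Real.exp_add, add_neg_cancel, Real.exp_zero, mul_one, hA0,
        Real.exp_zero, mul_one] at h2
    rw [hut, abs_mul, Real.abs_exp]
    exact mul_le_mul_of_nonneg_left
      (Real.exp_le_exp.2 (neg_le_neg (hA_lb t ht))) (abs_nonneg _)
  -- final squeeze
  have hbound : ∀ᶠ t in atTop, ‖y1 t - y2 t‖ ≤ M^2 * |u 0| * Real.exp (-(aMin * t)) := by
    filter_upwards [eventually_ge_atTop (0:ℝ)] with t ht
    have h1 := hy1pos t ht
    have h2 := hy2pos t ht
    have key : y1 t - y2 t = y1 t * y2 t * ((y2 t)⁻¹ - (y1 t)⁻¹) := by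
      field_simp
    rw [Real.norm_eq_abs, key, abs_mul]
    have habs : |(y2 t)⁻¹ - (y1 t)⁻¹| = |u t| := by
      rw [hu_def, abs_sub_comm]
    rw [habs]
    have h3 : |y1 t * y2 t| ≤ M^2 := by
      rw [abs_mul, abs_of_pos h1, abs_of_pos h2, sq]
      exact mul_le_mul (hy1ub t ht) (hy2ub t ht) h2.le hM.le
    calc |y1 t * y2 t| * |u t| ≤ M^2 * (|u 0| * Real.exp (-(aMin * t))) := by
          apply mul_le_mul h3 (hu_bound t ht) (abs_nonneg _) (by positivity)
      _ = M^2 * |u 0| * Real.exp (-(aMin * t)) := by ring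
  have hlim : Tendsto (fun t => M^2 * |u 0| * Real.exp (-(aMin * t))) atTop (nhds 0) := by
    have h1 : Tendsto (fun t : ℝ => -(aMin * t)) atTop atBot :=
      tendsto_neg_atBot_iff.2 ((tendsto_const_mul_atTop_of_pos haMin).2 tendsto_id)
    have h2 : Tendsto (fun t : ℝ => Real.exp (-(aMin * t))) atTop (nhds 0) :=
      Real.tendsto_exp_atBot.comp h1
    simpa using h2.const_mul (M^2 * |u 0|)
  exact squeeze_zero_norm' hbound hlim
end

section
/- Let a, b : [0,∞) → ℝ be continuous with a(t) ≤ a_max and b(t) ≥ b_min for all t ≥ 0, where a_max and b_min > 0 are constants. Let y0 > 0 and let y : [0,∞) → ℝ be differentiable with y(0) = y0 and y′(t) = y(t)(a(t) − b(t)·y(t)) for all t ≥ 0. Then for every t ≥ 0, 0 < y(t) ≤ max{a_max/b_min, y0}. -/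
open Filter

private lemma logistic_pos_aux
    (a b : ℝ → ℝ)
    (y0 : ℝ) (hy0 : 0 < y0)
    (y : ℝ → ℝ) (hinit : y 0 = y0)
    (hcont : ContinuousOn y (Set.Ici 0))
    (hderiv : ∀ t, 0 ≤ t → HasDerivWithinAt y (y t * (a t - b t * y t)) (Set.Ici 0) t)
    (ha : ContinuousOn a (Set.Ici 0)) (hb : ContinuousOn b (Set.Ici 0)) :
    ∀ t, 0 ≤ t → 0 < y t := by
  by_contra hcon
  push_neg at hcon
  obtain ⟨T, hT0, hTle⟩ := hcon
  -- the set of times in [0,T] where y ≤ 0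
  set S : Set ℝ := {t | t ∈ Set.Icc (0:ℝ) T ∧ y t ≤ 0} with hS
  have hSne : S.Nonempty := ⟨T, ⟨hT0, le_rfl⟩, hTle⟩
  have hSbdd : BddBelow S := ⟨0, fun t ht => ht.1.1⟩
  have hIccT : Set.Icc (0:ℝ) T ⊆ Set.Ici 0 := fun t ht => ht.1
  have hSclosed : IsClosed S := by
    have : S = Set.Icc (0:ℝ) T ∩ y ⁻¹' Set.Iic 0 := by
      ext t; simp [hS, Set.mem_inter_iff, and_comm]
    rw [this]
    exact (hcont.mono hIccT).preimage_isClosed_of_isClosed isClosed_Icc isClosed_Iic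
  set t0 := sInf S with ht0def
  have ht0S : t0 ∈ S := hSclosed.csInf_mem hSne hSbdd
  have ht0Icc : t0 ∈ Set.Icc (0:ℝ) T := ht0S.1
  have hyt0 : y t0 ≤ 0 := ht0S.2
  have ht0pos : 0 < t0 := by
    rcases lt_or_eq_of_le ht0Icc.1 with h | h
    · exact h
    · exfalso; rw [← h, hinit] at hyt0; linarith
  -- y > 0 on [0, t0)
  have hypos : ∀ s, s ∈ Set.Ico (0:ℝ) t0 → 0 < y s := by
    intro s hs
    by_contra hle
    push_neg at hle
    have : s ∈ S := ⟨⟨hs.1, hs.2.le.trans ht0Icc.2⟩, hle⟩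
    exact absurd (csInf_le hSbdd this) (not_le.mpr hs.2)
  -- bound on the coefficient g t = a t - b t * y t on [0, T]
  obtain ⟨C, hC⟩ := (isCompact_Icc (a := (0:ℝ)) (b := T)).exists_bound_of_continuousOn
    (f := fun t => a t - b t * y t)
    (((ha.mono hIccT).sub ((hb.mono hIccT).mul (hcont.mono hIccT))))
  -- the auxiliary function h t = y t * exp (C t) is monotone on [0, t0]
  set h : ℝ → ℝ := fun t => y t * Real.exp (C * t) with hh
  have hIcc0 : Set.Icc (0:ℝ) t0 ⊆ Set.Icc 0 T := Set.Icc_subset_Icc le_rfl ht0Icc.2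
  have hderivh : ∀ s, s ∈ Set.Ioo (0:ℝ) t0 →
      HasDerivAt h (y s * Real.exp (C * s) * ((a s - b s * y s) + C)) s := by
    intro s hs
    have hys : HasDerivAt y (y s * (a s - b s * y s)) s :=
      (hderiv s hs.1.le).hasDerivAt (Ici_mem_nhds hs.1)
    have hes : HasDerivAt (fun t => Real.exp (C * t)) (Real.exp (C * s) * C) s := by
      have := (Real.hasDerivAt_exp (C * s)).comp s ((hasDerivAt_id s).const_mul C)
      simpa [mul_comm, Function.comp_def] using this
    have := hys.mul hes
    exact this.congr_deriv (by ring)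
  have hmono : MonotoneOn h (Set.Icc 0 t0) := by
    apply monotoneOn_of_deriv_nonneg (convex_Icc 0 t0)
    · exact ((hcont.mono (hIcc0.trans hIccT)).mul (Real.continuous_exp.comp
        (continuous_const.mul continuous_id)).continuousOn)
    · rw [interior_Icc]
      intro s hs
      exact (hderivh s hs).differentiableAt.differentiableWithinAt
    · rw [interior_Icc]
      intro s hs
      rw [(hderivh s hs).deriv]
      have h1 : 0 < y s := hypos s ⟨hs.1.le, hs.2⟩
      have h2 : 0 ≤ (a s - b s * y s) + C := by
        have := hC s (hIcc0 ⟨hs.1.le, hs.2.le⟩)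
        rw [Real.norm_eq_abs] at this
        linarith [neg_abs_le (a s - b s * y s)]
      positivity
  have := hmono (Set.left_mem_Icc.mpr ht0pos.le) (Set.right_mem_Icc.mpr ht0pos.le) ht0pos.le
  simp only [hh, mul_zero, Real.exp_zero, mul_one, hinit] at this
  nlinarith [Real.exp_pos (C * t0)]

/-- A solution of the time-dependent logistic equation
`y' = y (a(t) - b(t) y)` with `a(t) ≤ a_max`, `b(t) ≥ b_min > 0` and positive initial
datum stays positive and bounded by `max (a_max / b_min) y0`. -/
theorem logistic_time_dependent_bounds
    (a b : ℝ → ℝ) (aMax bMin : ℝ) (hbMin : 0 < bMin)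
    (ha : ContinuousOn a (Set.Ici 0)) (hb : ContinuousOn b (Set.Ici 0))
    (ha_ub : ∀ t, 0 ≤ t → a t ≤ aMax) (hb_lb : ∀ t, 0 ≤ t → bMin ≤ b t)
    (y0 : ℝ) (hy0 : 0 < y0)
    (y : ℝ → ℝ) (hinit : y 0 = y0)
    (hderiv : ∀ t, 0 ≤ t → HasDerivWithinAt y (y t * (a t - b t * y t)) (Set.Ici 0) t) :
    ∀ t, 0 ≤ t → 0 < y t ∧ y t ≤ max (aMax / bMin) y0 := by
  have hcont : ContinuousOn y (Set.Ici 0) := fun t ht =>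
    (hderiv t ht).continuousWithinAt
  have hpos := logistic_pos_aux a b y0 hy0 y hinit hcont hderiv ha hb
  intro t ht
  refine ⟨hpos t ht, ?_⟩
  set B := max (aMax / bMin) y0 with hB
  by_contra hcon
  push_neg at hcon
  -- last time in [0, t] with y ≤ B
  set S : Set ℝ := {s | s ∈ Set.Icc (0:ℝ) t ∧ y s ≤ B} with hS
  have hy0B : y0 ≤ B := le_max_right _ _
  have hSne : S.Nonempty := ⟨0, ⟨le_rfl, ht⟩, by rw [hinit]; exact hy0B⟩
  have hSbdd : BddAbove S := ⟨t, fun s hs => hs.1.2⟩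
  have hIcct : Set.Icc (0:ℝ) t ⊆ Set.Ici 0 := fun s hs => hs.1
  have hSclosed : IsClosed S := by
    have : S = Set.Icc (0:ℝ) t ∩ y ⁻¹' Set.Iic B := by
      ext s; simp [hS, Set.mem_inter_iff, and_comm]
    rw [this]
    exact (hcont.mono hIcct).preimage_isClosed_of_isClosed isClosed_Icc isClosed_Iic
  set t0 := sSup S with ht0def
  have ht0S : t0 ∈ S := hSclosed.csSup_mem hSne hSbdd
  have ht0lt : t0 < t := by
    rcases lt_or_eq_of_le ht0S.1.2 with h | h
    · exact h
    · exfalso; rw [h] at ht0S; exact absurd ht0S.2 (not_le.mpr hcon)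
  -- on (t0, t], y > B
  have hgtB : ∀ s, s ∈ Set.Ioc t0 t → B < y s := by
    intro s hs
    by_contra hle
    push_neg at hle
    have : s ∈ S := ⟨⟨ht0S.1.1.trans hs.1.le, hs.2⟩, hle⟩
    exact absurd (le_csSup hSbdd this) (not_le.mpr hs.1)
  -- y is antitone on [t0, t]
  have hanti : AntitoneOn y (Set.Icc t0 t) := by
    have hsub : Set.Icc t0 t ⊆ Set.Ici 0 := fun s hs => ht0S.1.1.trans hs.1
    apply antitoneOn_of_deriv_nonpos (convex_Icc t0 t) (hcont.mono hsub)
    · rw [interior_Icc]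
      intro s hs
      have hs0 : 0 < s := lt_of_le_of_lt ht0S.1.1 hs.1
      exact ((hderiv s hs0.le).hasDerivAt (Ici_mem_nhds hs0)).differentiableAt.differentiableWithinAt
    · rw [interior_Icc]
      intro s hs
      have hs0 : 0 < s := lt_of_le_of_lt ht0S.1.1 hs.1
      rw [((hderiv s hs0.le).hasDerivAt (Ici_mem_nhds hs0)).deriv]
      have hyB : B < y s := hgtB s ⟨hs.1, hs.2.le⟩
      have hypos : 0 < y s := hpos s hs0.le
      have h1 : aMax / bMin ≤ B := le_max_left _ _
      have h2 : aMax ≤ bMin * y s := by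
        have : aMax / bMin < y s := lt_of_le_of_lt h1 hyB
        rw [div_lt_iff₀ hbMin] at this
        nlinarith
      have h3 : bMin * y s ≤ b s * y s :=
        mul_le_mul_of_nonneg_right (hb_lb s hs0.le) hypos.le
      have h4 : a s - b s * y s ≤ 0 := by
        have := ha_ub s hs0.le
        linarith
      nlinarith
  have := hanti (Set.left_mem_Icc.mpr ht0lt.le) (Set.right_mem_Icc.mpr ht0lt.le) ht0lt.le
  linarith [ht0S.2]
end

section
/- Let a, b, ε : [0,∞) → ℝ be continuous with a(t) ≥ a_min for all t ≥ 0 for some constant a_min > 0, ε(t) ≥ 0 for all t ≥ 0, and ε(t) → 0 as t → ∞. Let ŷ, y : [0,∞) → ℝ be differentiable with m ≤ ŷ(t) ≤ M and m ≤ y(t) ≤ M for all t ≥ 0, where 0 < m ≤ M are constants, and suppose ŷ′(t) = ŷ(t)(a(t) − ε(t) − b(t)·ŷ(t)) and y′(t) = y(t)(a(t) − b(t)·y(t)) for all t ≥ 0. Then y(t) − ŷ(t) → 0 as t → ∞. -/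
open Filter

/-- A bounded positive solution of the perturbed logistic equation
`ŷ' = ŷ(a(t) - ε(t) - b(t)ŷ)` with vanishing nonnegative perturbation `ε(t) → 0`
is asymptotic to a bounded positive solution of `y' = y(a(t) - b(t)y)`. -/
theorem perturbed_logistic_asymptotic
    (a b eps : ℝ → ℝ) (aMin : ℝ) (haMin : 0 < aMin)
    (ha : ContinuousOn a (Set.Ici 0)) (hb : ContinuousOn b (Set.Ici 0))
    (heps_cont : ContinuousOn eps (Set.Ici 0))
    (ha_lb : ∀ t, 0 ≤ t → aMin ≤ a t)
    (heps_nonneg : ∀ t, 0 ≤ t → 0 ≤ eps t)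
    (heps_lim : Tendsto eps atTop (nhds 0))
    (m M : ℝ) (hm : 0 < m) (hmM : m ≤ M)
    (yhat y : ℝ → ℝ)
    (hyhat_lb : ∀ t, 0 ≤ t → m ≤ yhat t) (hyhat_ub : ∀ t, 0 ≤ t → yhat t ≤ M)
    (hy_lb : ∀ t, 0 ≤ t → m ≤ y t) (hy_ub : ∀ t, 0 ≤ t → y t ≤ M)
    (hd_hat : ∀ t, 0 ≤ t →
      HasDerivWithinAt yhat (yhat t * (a t - eps t - b t * yhat t)) (Set.Ici 0) t)
    (hd : ∀ t, 0 ≤ t → HasDerivWithinAt y (y t * (a t - b t * y t)) (Set.Ici 0) t) :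
    Tendsto (fun t => y t - yhat t) atTop (nhds 0) := by
  have hM : 0 < M := lt_of_lt_of_le hm hmM
  have hy_pos : ∀ t, 0 ≤ t → 0 < y t := fun t ht => lt_of_lt_of_le hm (hy_lb t ht)
  have hyhat_pos : ∀ t, 0 ≤ t → 0 < yhat t := fun t ht => lt_of_lt_of_le hm (hyhat_lb t ht)
  set s : ℝ → ℝ := fun t => (yhat t)⁻¹ - (y t)⁻¹ with hs_def
  clear_value s
  -- the derivative of s
  have hs_deriv : ∀ t, 0 ≤ t →
      HasDerivWithinAt s (-(a t) * s t + eps t * (yhat t)⁻¹) (Set.Ici 0) t := by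
    intro t ht
    have h1 := (hd_hat t ht).inv (ne_of_gt (hyhat_pos t ht))
    have h2 := (hd t ht).inv (ne_of_gt (hy_pos t ht))
    have h3 := h1.sub h2
    refine HasDerivWithinAt.congr_deriv (by rw [hs_def]; exact h3) ?_
    have hy0 : y t ≠ 0 := ne_of_gt (hy_pos t ht)
    have hyh0 : yhat t ≠ 0 := ne_of_gt (hyhat_pos t ht)
    simp only [hs_def]
    field_simp
    ring
  -- s tends to 0
  have hs_lim : Tendsto s atTop (nhds 0) := by
    rw [Metric.tendsto_atTop]
    intro ε hε
    obtain ⟨δ, hδpos, hδlt⟩ : ∃ δ : ℝ, 0 < δ ∧ 2 * δ ^ 2 < ε ^ 2 :=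
      ⟨ε / 2, by positivity, by nlinarith⟩
    -- find T past which the forcing term is small
    have hT : ∃ T : ℝ, 0 ≤ T ∧ ∀ t, T ≤ t → eps t * (yhat t)⁻¹ ≤ aMin * δ / 2 := by
      have hev : ∀ᶠ t in atTop, eps t < m * (aMin * δ / 2) := by
        have := heps_lim.eventually (gt_mem_nhds (show (0:ℝ) < m * (aMin * δ / 2) by positivity))
        exact this
      obtain ⟨T₀, hT₀⟩ := eventually_atTop.mp (hev.and (eventually_ge_atTop 0))
      refine ⟨max T₀ 0, le_max_right _ _, fun t htT => ?_⟩
      have ht0 : 0 ≤ t := le_trans (le_max_right _ _) htT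
      have h1 := hT₀ t (le_trans (le_max_left _ _) htT)
      have hq : (yhat t)⁻¹ ≤ m⁻¹ := by
        exact inv_anti₀ hm (hyhat_lb t ht0)
      have hqpos : 0 ≤ (yhat t)⁻¹ := le_of_lt (inv_pos.mpr (hyhat_pos t ht0))
      calc eps t * (yhat t)⁻¹ ≤ eps t * m⁻¹ :=
            mul_le_mul_of_nonneg_left hq (heps_nonneg t ht0)
        _ ≤ (m * (aMin * δ / 2)) * m⁻¹ := by
            apply mul_le_mul_of_nonneg_right (le_of_lt h1.1)
            positivity
        _ = aMin * δ / 2 := by field_simp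
    obtain ⟨T, hT0, hTsmall⟩ := hT
    -- the Lyapunov function ψ is antitone on [T, ∞)
    set ψ : ℝ → ℝ := fun t => (s t ^ 2 - δ ^ 2) * Real.exp (aMin * (t - T)) with hψ_def
    have hψ_deriv : ∀ x ∈ Set.Ici T, HasDerivWithinAt ψ
        ((2 * s x ^ 1 * (-(a x) * s x + eps x * (yhat x)⁻¹)) * Real.exp (aMin * (x - T))
          + (s x ^ 2 - δ ^ 2) * (Real.exp (aMin * (x - T)) * aMin)) (Set.Ici T) x := by
      intro x hx
      have hx0 : (0:ℝ) ≤ x := le_trans hT0 hx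
      have hsx := (hs_deriv x hx0).mono (Set.Ici_subset_Ici.mpr hT0)
      have hφx := hsx.pow 2
      have hEx : HasDerivAt (fun u => Real.exp (aMin * (u - T)))
          (Real.exp (aMin * (x - T)) * aMin) x := by
        have h1 : HasDerivAt (fun u : ℝ => aMin * (u - T)) aMin x := by
          simpa using ((hasDerivAt_id x).sub_const T).const_mul aMin
        exact h1.exp
      have := (hφx.sub_const (δ ^ 2)).mul hEx.hasDerivWithinAt
      simp [Nat.cast_ofNat] at this ⊢; exact this
    have hψ_anti : AntitoneOn ψ (Set.Ici T) := by
      apply antitoneOn_of_hasDerivWithinAt_nonpos (convex_Ici T)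
        (fun x hx => (hψ_deriv x hx).continuousWithinAt)
        (fun x hx => ((hψ_deriv x (interior_subset hx)).mono interior_subset))
      intro x hx
      rw [interior_Ici] at hx
      have hx0 : (0:ℝ) ≤ x := le_trans hT0 (le_of_lt hx)
      have hE : 0 < Real.exp (aMin * (x - T)) := Real.exp_pos _
      have hg0 : 0 ≤ eps x * (yhat x)⁻¹ :=
        mul_nonneg (heps_nonneg x hx0) (le_of_lt (inv_pos.mpr (hyhat_pos x hx0)))
      have hg1 : eps x * (yhat x)⁻¹ ≤ aMin * δ / 2 := hTsmall x (le_of_lt hx)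
      have hax : aMin ≤ a x := ha_lb x hx0
      have key : 2 * s x * (-(a x) * s x + eps x * (yhat x)⁻¹)
          + (s x ^ 2 - δ ^ 2) * aMin ≤ 0 := by
        have h1 : s x * (eps x * (yhat x)⁻¹) ≤ |s x| * (aMin * δ / 2) := by
          calc s x * (eps x * (yhat x)⁻¹) ≤ |s x| * (eps x * (yhat x)⁻¹) :=
                mul_le_mul_of_nonneg_right (le_abs_self _) hg0
            _ ≤ |s x| * (aMin * δ / 2) :=
                mul_le_mul_of_nonneg_left hg1 (abs_nonneg _)
        have h2 : aMin * s x ^ 2 ≤ a x * s x ^ 2 :=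
          mul_le_mul_of_nonneg_right hax (sq_nonneg _)
        have c3 : δ * |s x| ≤ s x ^ 2 + δ ^ 2 := by
          nlinarith [sq_nonneg (|s x| - δ), sq_abs (s x), abs_nonneg (s x), sq_nonneg (s x),
            sq_nonneg δ]
        have c4 : aMin * (δ * |s x|) ≤ aMin * (s x ^ 2 + δ ^ 2) :=
          mul_le_mul_of_nonneg_left c3 (le_of_lt haMin)
        nlinarith [h1, h2, c4]
      calc 2 * s x ^ 1 * (-(a x) * s x + eps x * (yhat x)⁻¹) * Real.exp (aMin * (x - T))
            + (s x ^ 2 - δ ^ 2) * (Real.exp (aMin * (x - T)) * aMin)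
          = (2 * s x * (-(a x) * s x + eps x * (yhat x)⁻¹)
              + (s x ^ 2 - δ ^ 2) * aMin) * Real.exp (aMin * (x - T)) := by ring
        _ ≤ 0 := mul_nonpos_of_nonpos_of_nonneg key (le_of_lt hE)
    -- deduce the decay estimate
    have hbound : ∀ t, T ≤ t →
        s t ^ 2 ≤ δ ^ 2 + s T ^ 2 * Real.exp (-(aMin * (t - T))) := by
      intro t ht
      have h1 := hψ_anti (Set.self_mem_Ici) (Set.mem_Ici.mpr ht) ht
      have hψT : ψ T = s T ^ 2 - δ ^ 2 := by simp [hψ_def]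
      have hE : 0 < Real.exp (aMin * (t - T)) := Real.exp_pos _
      have h2 : (s t ^ 2 - δ ^ 2) * Real.exp (aMin * (t - T)) ≤ s T ^ 2 := by
        have h1' : ψ t ≤ s T ^ 2 - δ ^ 2 := le_trans h1 (le_of_eq hψT)
        have heq : ψ t = (s t ^ 2 - δ ^ 2) * Real.exp (aMin * (t - T)) := rfl
        rw [heq] at h1'
        nlinarith [sq_nonneg δ]
      have hF : 0 < Real.exp (-(aMin * (t - T))) := Real.exp_pos _
      have hEF : Real.exp (aMin * (t - T)) * Real.exp (-(aMin * (t - T))) = 1 := by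
        rw [← Real.exp_add]; simp
      have h5 := mul_le_mul_of_nonneg_right h2 (le_of_lt hF)
      rw [mul_assoc, hEF, mul_one] at h5
      linarith
    -- choose N large enough
    have hdecay : Tendsto (fun t => s T ^ 2 * Real.exp (-(aMin * (t - T)))) atTop (nhds 0) := by
      have h1 : Tendsto (fun t : ℝ => aMin * (t - T)) atTop atTop := by
        apply Tendsto.const_mul_atTop haMin
        exact tendsto_atTop_add_const_right atTop (-T) tendsto_id
      have h2 : Tendsto (fun t : ℝ => Real.exp (-(aMin * (t - T)))) atTop (nhds 0) := by
        apply Real.tendsto_exp_atBot.comp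
        exact tendsto_neg_atBot_iff.mpr h1
      have := h2.const_mul (s T ^ 2)
      simpa using this
    have hev2 : ∀ᶠ t in atTop, s T ^ 2 * Real.exp (-(aMin * (t - T))) < δ ^ 2 :=
      hdecay.eventually (gt_mem_nhds (show (0:ℝ) < δ ^ 2 by positivity))
    obtain ⟨N₀, hN₀⟩ := eventually_atTop.mp (hev2.and (eventually_ge_atTop T))
    refine ⟨max N₀ T, fun t htN => ?_⟩
    have htT : T ≤ t := le_trans (le_max_right _ _) htN
    have h5 := hN₀ t (le_trans (le_max_left _ _) htN)
    have h6 : s t ^ 2 < 2 * δ ^ 2 := by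
      have := hbound t htT
      linarith [h5.1]
    rw [Real.dist_eq, sub_zero]
    have h7 : s t ^ 2 < ε ^ 2 := by linarith
    exact abs_lt_of_sq_lt_sq h7 (le_of_lt hε)
  -- conclude via squeeze
  have hsq : ∀ᶠ t in atTop, ‖y t - yhat t‖ ≤ M ^ 2 * |s t| := by
    filter_upwards [eventually_ge_atTop (0:ℝ)] with t ht
    have hy0 : y t ≠ 0 := ne_of_gt (hy_pos t ht)
    have hyh0 : yhat t ≠ 0 := ne_of_gt (hyhat_pos t ht)
    have heq : y t - yhat t = (y t * yhat t) * s t := by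
      simp only [hs_def]; field_simp
    rw [Real.norm_eq_abs, heq, abs_mul]
    apply mul_le_mul_of_nonneg_right _ (abs_nonneg _)
    rw [abs_mul, abs_of_pos (hy_pos t ht), abs_of_pos (hyhat_pos t ht)]
    calc y t * yhat t ≤ M * M :=
          mul_le_mul (hy_ub t ht) (hyhat_ub t ht) (le_of_lt (hyhat_pos t ht)) (le_of_lt hM)
      _ = M ^ 2 := by ring
  have hlim2 : Tendsto (fun t => M ^ 2 * |s t|) atTop (nhds 0) := by
    have := (hs_lim.abs).const_mul (M ^ 2)
    simpa using this
  exact squeeze_zero_norm' hsq hlim2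
end

section
/- Let (σ_n)_{n≥1} be a sequence of independent random variables on a probability space such that for every n, σ_{2n+1} is exponentially distributed with rate α and σ_{2n} is exponentially distributed with rate β, where α, β > 0. Then for any real numbers 0 < s1 < s2 and 0 < s3 < s4, with probability 1 there exist infinitely many n with s1 < σ_n < s2 and s3 < σ_{n+1} < s4. -/
open Filter MeasureTheory ProbabilityTheory
open scoped ENNReal NNReal

lemma expMeasure_Ioo_pos {r a b : ℝ} (hr : 0 < r) (ha : 0 < a) (hab : a < b) :
    0 < expMeasure r (Set.Ioo a b) := by
  have h1 : expMeasure r (Set.Ioo a b) = ∫⁻ x in Set.Ioo a b, exponentialPDF r x := by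
    rw [expMeasure, gammaMeasure, withDensity_apply _ measurableSet_Ioo]
    rfl
  rw [h1]
  calc (0 : ℝ≥0∞)
      < ENNReal.ofReal (r * Real.exp (-(r * b))) * volume (Set.Ioo a b) := by
        apply ENNReal.mul_pos
        · exact (ENNReal.ofReal_pos.mpr (by positivity)).ne'
        · rw [Real.volume_Ioo]
          exact (ENNReal.ofReal_pos.mpr (by linarith)).ne'
    _ = ∫⁻ _ in Set.Ioo a b, ENNReal.ofReal (r * Real.exp (-(r * b))) := by
        rw [setLIntegral_const]
    _ ≤ ∫⁻ x in Set.Ioo a b, exponentialPDF r x := by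
        refine setLIntegral_mono' measurableSet_Ioo fun x hx => ?_
        rw [exponentialPDF_of_nonneg (le_of_lt (lt_trans ha hx.1))]
        refine ENNReal.ofReal_le_ofReal ?_
        have hxb : x ≤ b := le_of_lt hx.2
        gcongr

/-- For a sequence `(σ_n)_{n ≥ 1}` of independent random variables where the
odd-indexed ones are exponential with rate `α` and the even-indexed ones are exponential with
rate `β`, almost surely there are infinitely many `n` with `σ_n ∈ (s1, s2)` and
`σ_{n+1} ∈ (s3, s4)`. -/
theorem sojourn_times_infinitely_often
    {Ω : Type*} [MeasurableSpace Ω] (μ : Measure Ω) [IsProbabilityMeasure μ]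
    (σ : ℕ → Ω → ℝ) (hmeas : ∀ n, Measurable (σ n))
    (α β : ℝ) (hα : 0 < α) (hβ : 0 < β)
    (hindep : iIndepFun (fun n : ℕ => σ (n + 1)) μ)
    (hodd : ∀ n : ℕ, μ.map (σ (2 * n + 1)) = expMeasure α)
    (heven : ∀ n : ℕ, 1 ≤ n → μ.map (σ (2 * n)) = expMeasure β)
    (s1 s2 s3 s4 : ℝ) (hs1 : 0 < s1) (hs12 : s1 < s2) (hs3 : 0 < s3) (hs34 : s3 < s4) :
    μ {ω | ∃ᶠ n in atTop, (1 ≤ n ∧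
      σ n ω ∈ Set.Ioo s1 s2 ∧ σ (n + 1) ω ∈ Set.Ioo s3 s4)} = 1 := by
  classical
  set f : ℕ → Ω → ℝ := fun n => σ (n + 1) with hf
  set A : ℕ → Set Ω := fun k =>
    f (2 * k) ⁻¹' Set.Ioo s1 s2 ∩ f (2 * k + 1) ⁻¹' Set.Ioo s3 s4 with hAdef
  have hfm : ∀ n, Measurable (f n) := fun n => hmeas _
  have hAm : ∀ k, MeasurableSet (A k) :=
    fun k => ((hfm _) measurableSet_Ioo).inter ((hfm _) measurableSet_Ioo)
  -- measures of the two preimages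
  have hm1 : ∀ k, μ (f (2 * k) ⁻¹' Set.Ioo s1 s2) = expMeasure α (Set.Ioo s1 s2) := by
    intro k
    have h : f (2 * k) = σ (2 * k + 1) := rfl
    rw [h, ← Measure.map_apply (hmeas _) measurableSet_Ioo, hodd k]
  have hm2 : ∀ k, μ (f (2 * k + 1) ⁻¹' Set.Ioo s3 s4) = expMeasure β (Set.Ioo s3 s4) := by
    intro k
    have h : f (2 * k + 1) = σ (2 * (k + 1)) := by
      have : 2 * k + 1 + 1 = 2 * (k + 1) := by ring
      simp only [hf, this]
    rw [h, ← Measure.map_apply (hmeas _) measurableSet_Ioo, heven (k + 1) (by omega)]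
  -- the sets indexed by parity
  set sets : ℕ → Set ℝ := fun i => if Even i then Set.Ioo s1 s2 else Set.Ioo s3 s4 with hsets
  have hsetsm : ∀ i, MeasurableSet (sets i) := fun i => by
    by_cases h : Even i <;> simp [hsets, h, measurableSet_Ioo]
  have h1 : ∀ k, sets (2 * k) = Set.Ioo s1 s2 := fun k => if_pos ⟨k, by ring⟩
  have h2 : ∀ k, sets (2 * k + 1) = Set.Ioo s3 s4 := fun k =>
    if_neg (by rintro ⟨r, hr⟩; omega)
  have hAeq : ∀ k, A k = ⋂ i ∈ ({2 * k, 2 * k + 1} : Finset ℕ), f i ⁻¹' sets i := by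
    intro k
    rw [Finset.set_biInter_insert, Finset.set_biInter_singleton, h1, h2]
  have hprod : ∀ S : Finset ℕ,
      μ (⋂ i ∈ S, f i ⁻¹' sets i) = ∏ i ∈ S, μ (f i ⁻¹' sets i) :=
    fun S => hindep.measure_inter_preimage_eq_mul S (fun i _ => hsetsm i)
  -- independence of the events
  have hiIndep : iIndepSet A μ := by
    rw [iIndepSet_iff_meas_biInter hAm]
    intro s
    have hdisj : (↑s : Set ℕ).PairwiseDisjoint
        (fun k => ({2 * k, 2 * k + 1} : Finset ℕ)) := by
      intro x _ y _ hxy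
      simp only [Finset.disjoint_left, Finset.mem_insert, Finset.mem_singleton]
      omega
    calc μ (⋂ k ∈ s, A k)
        = μ (⋂ i ∈ s.biUnion (fun k => ({2 * k, 2 * k + 1} : Finset ℕ)), f i ⁻¹' sets i) := by
          congr 1
          ext ω
          simp only [Set.mem_iInter, Finset.mem_biUnion, hAeq]
          constructor
          · rintro h i ⟨k, hk, hik⟩
            exact h k hk i hik
          · intro h k hk i hik
            exact h i ⟨k, hk, hik⟩
      _ = ∏ i ∈ s.biUnion (fun k => ({2 * k, 2 * k + 1} : Finset ℕ)), μ (f i ⁻¹' sets i) :=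
          hprod _
      _ = ∏ k ∈ s, ∏ i ∈ ({2 * k, 2 * k + 1} : Finset ℕ), μ (f i ⁻¹' sets i) :=
          Finset.prod_biUnion hdisj
      _ = ∏ k ∈ s, μ (A k) := by
          refine Finset.prod_congr rfl fun k _ => ?_
          rw [hAeq k, hprod]
  -- each event has the same positive probability
  have hμA : ∀ k, μ (A k) = expMeasure α (Set.Ioo s1 s2) * expMeasure β (Set.Ioo s3 s4) := by
    intro k
    rw [hAeq k, hprod, Finset.prod_pair (by omega), h1, h2, hm1, hm2]
  have hpos : expMeasure α (Set.Ioo s1 s2) * expMeasure β (Set.Ioo s3 s4) ≠ 0 :=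
    mul_ne_zero (expMeasure_Ioo_pos hα hs1 hs12).ne' (expMeasure_Ioo_pos hβ hs3 hs34).ne'
  have htop : (∑' k, μ (A k)) = ∞ := by
    rw [tsum_congr hμA]
    exact ENNReal.tsum_const_eq_top_of_ne_zero hpos
  have hlimsup := measure_limsup_eq_one hAm hiIndep htop
  -- conclude
  refine le_antisymm prob_le_one ?_
  rw [← hlimsup]
  apply measure_mono
  intro ω hω
  rw [mem_limsup_iff_frequently_mem, frequently_atTop] at hω
  rw [Set.mem_setOf_eq, frequently_atTop]
  intro N
  obtain ⟨k, hk, hAk⟩ := hω N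
  exact ⟨2 * k + 1, by omega, by omega, hAk.1, hAk.2⟩
end

section
/- Let a, b, c, d, e, f be positive real constants with a·e > b·d, and set u* = (a·f + c·d)/(b·f + c·e), v* = (a·e − b·d)/(b·f + c·e). Let U, V : [0,∞) → ℝ be differentiable with U(0) > 0, V(0) > 0, and U′(t) = U(t)(a − b·U(t) − c·V(t)), V′(t) = V(t)(−d + e·U(t) − f·V(t)) for all t ≥ 0. Then U(t) → u* and V(t) → v* as t → ∞. -/
open Filter Set Topology

lemma lv_aux_hda {F F' : ℝ → ℝ} (hF : ∀ t, 0 ≤ t → HasDerivWithinAt F (F' t) (Set.Ici 0) t)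
    {t : ℝ} (ht : 0 < t) : HasDerivAt F (F' t) t :=
  (hF t ht.le).hasDerivAt (Ici_mem_nhds ht)

lemma lv_aux_cont {F F' : ℝ → ℝ} (hF : ∀ t, 0 ≤ t → HasDerivWithinAt F (F' t) (Set.Ici 0) t) :
    ContinuousOn F (Set.Ici 0) := fun t ht => (hF t ht).continuousWithinAt

lemma lv_mono_aux {F F' : ℝ → ℝ} {x y : ℝ} (hx : 0 ≤ x) (hxy : x ≤ y)
    (hF : ∀ t, 0 ≤ t → HasDerivWithinAt F (F' t) (Set.Ici 0) t)
    (h : ∀ t ∈ Set.Ioo x y, 0 ≤ F' t) : F x ≤ F y := by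
  have hc : ContinuousOn F (Set.Icc x y) :=
    (lv_aux_cont hF).mono (fun t ht => hx.trans ht.1)
  have hmono := monotoneOn_of_deriv_nonneg (convex_Icc x y) hc ?_ ?_
  · exact hmono ⟨le_refl x, hxy⟩ ⟨hxy, le_refl y⟩ hxy
  · intro t ht
    rw [interior_Icc] at ht
    exact ((lv_aux_hda hF (hx.trans_lt ht.1)).differentiableAt).differentiableWithinAt
  · intro t ht
    rw [interior_Icc] at ht
    rw [(lv_aux_hda hF (hx.trans_lt ht.1)).deriv]
    exact h t ht

lemma lv_anti_aux {F F' : ℝ → ℝ} {x y : ℝ} (hx : 0 ≤ x) (hxy : x < y)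
    (hF : ∀ t, 0 ≤ t → HasDerivWithinAt F (F' t) (Set.Ici 0) t)
    (h : ∀ t ∈ Set.Ioo x y, F' t < 0) : F y < F x := by
  have hc : ContinuousOn F (Set.Icc x y) :=
    (lv_aux_cont hF).mono (fun t ht => hx.trans ht.1)
  have hanti := strictAntiOn_of_deriv_neg (convex_Icc x y) hc ?_
  · exact hanti ⟨le_refl x, hxy.le⟩ ⟨hxy.le, le_refl y⟩ hxy
  · intro t ht
    rw [interior_Icc] at ht
    rw [(lv_aux_hda hF (hx.trans_lt ht.1)).deriv]
    exact h t ht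

lemma lv_pos {X g : ℝ → ℝ} (hg : ContinuousOn g (Set.Ici 0))
    (hX : ∀ t, 0 ≤ t → HasDerivWithinAt X (X t * g t) (Set.Ici 0) t)
    (h0 : 0 < X 0) : ∀ t, 0 ≤ t → 0 < X t := by
  intro T hT
  by_contra hcon
  push_neg at hcon
  have hXc : ContinuousOn X (Set.Ici 0) := lv_aux_cont hX
  set S : Set ℝ := Set.Icc 0 T ∩ X ⁻¹' (Set.Iic 0) with hS
  have hScl : IsClosed S :=
    (hXc.mono (fun t ht => ht.1)).preimage_isClosed_of_isClosed isClosed_Icc isClosed_Iic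
  have hSne : S.Nonempty := ⟨T, ⟨hT, le_refl T⟩, hcon⟩
  have hSbdd : BddBelow S := ⟨0, fun t ht => ht.1.1⟩
  set τ := sInf S with hτ
  have hτS : τ ∈ S := hScl.csInf_mem hSne hSbdd
  have hτ0 : 0 ≤ τ := hτS.1.1
  have hτpos : 0 < τ := by
    rcases hτ0.lt_or_eq with h | h
    · exact h
    · exfalso; have := hτS.2; rw [← h] at this; exact absurd this (not_le.2 h0)
  have hXpos : ∀ t ∈ Set.Ico 0 τ, 0 < X t := by
    intro t ht
    by_contra hXt
    push_neg at hXt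
    have : t ∈ S := ⟨⟨ht.1, ht.2.le.trans hτS.1.2⟩, hXt⟩
    exact absurd (csInf_le hSbdd this) (not_le.2 ht.2)
  obtain ⟨K, hK⟩ := (isCompact_Icc (a := (0:ℝ)) (b := τ)).exists_bound_of_continuousOn
    (hg.mono (fun t ht => ht.1))
  set h : ℝ → ℝ := fun t => X t * Real.exp (K * t) with hh
  have hder : ∀ t, 0 ≤ t →
      HasDerivWithinAt h (X t * (g t + K) * Real.exp (K * t)) (Set.Ici 0) t := by
    intro t ht
    have h1 : HasDerivWithinAt (fun s => Real.exp (K * s)) (K * Real.exp (K * t)) (Set.Ici 0) t := by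
      have := ((Real.hasDerivAt_exp (K * t)).comp t ((hasDerivAt_id t).const_mul K)).hasDerivWithinAt
        (s := Set.Ici (0:ℝ))
      exact this.congr_deriv (by ring)
    have := (hX t ht).mul h1
    exact this.congr_deriv (by ring)
  have hmono : h 0 ≤ h τ := by
    apply lv_mono_aux le_rfl hτpos.le hder
    intro t ht
    have ht0 : 0 ≤ t := le_of_lt ht.1
    have hXt : 0 < X t := hXpos t ⟨ht0, ht.2⟩
    have : 0 ≤ g t + K := by
      have := hK t ⟨ht0, ht.2.le⟩
      have := neg_le_of_abs_le this
      linarith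
    positivity
  have h0' : 0 < h 0 := by simp [hh, h0]
  have hτ' : h τ ≤ 0 := by
    have : X τ ≤ 0 := hτS.2
    have he : 0 < Real.exp (K * τ) := Real.exp_pos _
    exact mul_nonpos_of_nonpos_of_nonneg this he.le
  linarith

lemma lv_bdd {X F : ℝ → ℝ}
    (hX : ∀ t, 0 ≤ t → HasDerivWithinAt X (F t) (Set.Ici 0) t)
    {M : ℝ} (h0 : X 0 ≤ M) (hdec : ∀ t, 0 < t → M < X t → F t < 0) :
    ∀ t, 0 ≤ t → X t ≤ M := by
  intro t1 ht1
  by_contra hcon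
  push_neg at hcon
  have ht1pos : 0 < t1 := by
    rcases ht1.lt_or_eq with h | h
    · exact h
    · exfalso; rw [← h] at hcon; exact absurd hcon (not_lt.2 h0)
  have hXc : ContinuousOn X (Set.Ici 0) := lv_aux_cont hX
  set S : Set ℝ := Set.Icc 0 t1 ∩ X ⁻¹' (Set.Iic M) with hS
  have hScl : IsClosed S :=
    (hXc.mono (fun t ht => ht.1)).preimage_isClosed_of_isClosed isClosed_Icc isClosed_Iic
  have hSne : S.Nonempty := ⟨0, ⟨le_rfl, ht1⟩, h0⟩
  have hSbdd : BddAbove S := ⟨t1, fun t ht => ht.1.2⟩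
  set s := sSup S with hs
  have hsS : s ∈ S := hScl.csSup_mem hSne hSbdd
  have hs0 : 0 ≤ s := hsS.1.1
  have hst1 : s < t1 := by
    rcases hsS.1.2.lt_or_eq with h | h
    · exact h
    · exfalso; have := hsS.2; rw [h] at this; exact absurd this (not_le.2 hcon)
  have hgt : ∀ u ∈ Set.Ioo s t1, M < X u := by
    intro u hu
    by_contra hXu
    push_neg at hXu
    have : u ∈ S := ⟨⟨hs0.trans hu.1.le, hu.2.le⟩, hXu⟩
    exact absurd (le_csSup hSbdd this) (not_le.2 hu.1)
  have := lv_anti_aux hs0 hst1 hX (fun u hu => hdec u (hs0.trans_lt hu.1) (hgt u hu))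
  have h2 : X s ≤ M := hsS.2
  linarith

lemma lv_log_bound {x k : ℝ} (hx : 0 < x) (hk : 0 < k) :
    k - k * Real.log k ≤ x - k * Real.log x := by
  have h1 : Real.log (x / k) ≤ x / k - 1 := Real.log_le_sub_one_of_pos (div_pos hx hk)
  rw [Real.log_div hx.ne' hk.ne'] at h1
  have h2 : k * (Real.log x - Real.log k) ≤ k * (x / k - 1) :=
    mul_le_mul_of_nonneg_left h1 hk.le
  have h3 : k * (x / k - 1) = x - k := by field_simp
  nlinarith

lemma lv_tendsto_of_anti {W : ℝ → ℝ} (hanti : ∀ x y, 0 ≤ x → x ≤ y → W y ≤ W x)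
    {B : ℝ} (hB : ∀ t, 0 ≤ t → B ≤ W t) : ∃ L, Tendsto W atTop (𝓝 L) := by
  set L := sInf (W '' Set.Ici 0) with hL
  have hne : (W '' Set.Ici 0).Nonempty := ⟨W 0, 0, Set.self_mem_Ici, rfl⟩
  have hbdd : BddBelow (W '' Set.Ici 0) := ⟨B, fun y ⟨t, ht, hty⟩ => hty ▸ hB t ht⟩
  refine ⟨L, ?_⟩
  rw [Metric.tendsto_atTop]
  intro ε hε
  have hlt : L < L + ε := by linarith
  obtain ⟨y, ⟨t0, ht0, rfl⟩, hy⟩ := exists_lt_of_csInf_lt hne (show sInf (W '' Set.Ici 0) < L + ε from hlt)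
  refine ⟨t0, fun t ht => ?_⟩
  have ht0' : 0 ≤ t := ht0.trans ht
  have h1 : L ≤ W t := csInf_le hbdd ⟨t, Set.mem_Ici.2 ht0', rfl⟩
  have h2 : W t ≤ W t0 := hanti t0 t ht0 ht
  rw [Real.dist_eq, abs_lt]
  constructor <;> linarith

lemma lv_barbalat {g g' G : ℝ → ℝ} {K L : ℝ}
    (hg : ∀ t, 0 ≤ t → HasDerivWithinAt g (g' t) (Set.Ici 0) t)
    (hgnn : ∀ t, 0 ≤ t → 0 ≤ g t)
    (hK : ∀ t, 0 ≤ t → |g' t| ≤ K)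
    (hG : ∀ t, 0 ≤ t → HasDerivWithinAt G (g t) (Set.Ici 0) t)
    (hGL : Tendsto G atTop (𝓝 L)) :
    Tendsto g atTop (𝓝 0) := by
  have hK0 : 0 ≤ K := (abs_nonneg _).trans (hK 0 le_rfl)
  rw [Metric.tendsto_atTop]
  by_contra hcon
  push_neg at hcon
  obtain ⟨ε, hε, hfreq⟩ := hcon
  set δ := ε / (2 * (K + 1)) with hδ
  have hδpos : 0 < δ := by positivity
  -- Claim 1: if g t ≥ ε at t ≥ 0, then g ≥ ε/2 on [t, t+δ]
  have claim1 : ∀ t, 0 ≤ t → ε ≤ g t → ∀ s ∈ Set.Icc t (t + δ), ε / 2 ≤ g s := by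
    intro t ht hgt s hs
    have key : g t + (K + 1) * t ≤ g s + (K + 1) * s := by
      apply lv_mono_aux (F := fun u => g u + (K + 1) * u) (F' := fun u => g' u + (K + 1))
        ht hs.1
      · intro u hu
        exact ((hg u hu).add (((hasDerivAt_id u).const_mul (K+1)).hasDerivWithinAt)).congr_deriv
          (by ring)
      · intro u hu
        have hu0 : 0 ≤ u := ht.trans hu.1.le
        have := neg_le_of_abs_le (hK u hu0)
        linarith
    have hst : s - t ≤ δ := by linarith [hs.2]
    have hKδ : (K + 1) * δ = ε / 2 := by
      rw [hδ]; field_simp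
    nlinarith [hs.1, hK0]
  -- Claim 2: G increment
  have claim2 : ∀ t, 0 ≤ t → ε ≤ g t → δ * (ε / 2) ≤ G (t + δ) - G t := by
    intro t ht hgt
    have key : G t - (ε / 2) * t ≤ G (t + δ) - (ε / 2) * (t + δ) := by
      apply lv_mono_aux (F := fun u => G u - (ε / 2) * u) (F' := fun u => g u - ε / 2)
        ht (by linarith)
      · intro u hu
        exact ((hG u hu).sub (((hasDerivAt_id u).const_mul (ε/2)).hasDerivWithinAt)).congr_deriv
          (by ring)
      · intro u hu
        have := claim1 t ht hgt u ⟨hu.1.le, hu.2.le⟩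
        linarith
    nlinarith
  -- Cauchy property of G
  rw [Metric.tendsto_atTop] at hGL
  obtain ⟨N, hN⟩ := hGL (δ * (ε / 2) / 4) (by positivity)
  obtain ⟨t, ht, hgt⟩ := hfreq (max N 0)
  have ht0 : 0 ≤ t := le_trans (le_max_right _ _) ht
  have htN : N ≤ t := le_trans (le_max_left _ _) ht
  have hgtε : ε ≤ g t := by
    have := hgt
    rw [Real.dist_eq, sub_zero] at this
    rw [abs_of_nonneg (hgnn t ht0)] at this
    exact this
  have h1 := hN t htN
  have h2 := hN (t + δ) (by linarith)
  rw [Real.dist_eq] at h1 h2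
  have h3 := claim2 t ht0 hgtε
  have h4 := abs_lt.1 h1
  have h5 := abs_lt.1 h2
  nlinarith [hδpos, hε]

/-- Global convergence to the positive coexistence equilibrium for the
autonomous Lotka–Volterra predator-prey system when `a e > b d`. -/
theorem lotka_volterra_coexistence_convergence
    (a b c d e f : ℝ)
    (ha : 0 < a) (hb : 0 < b) (hc : 0 < c) (hd : 0 < d) (he : 0 < e) (hf : 0 < f)
    (hcond : b * d < a * e)
    (U V : ℝ → ℝ) (hU0 : 0 < U 0) (hV0 : 0 < V 0)
    (hdU : ∀ t, 0 ≤ t →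
      HasDerivWithinAt U (U t * (a - b * U t - c * V t)) (Set.Ici 0) t)
    (hdV : ∀ t, 0 ≤ t →
      HasDerivWithinAt V (V t * (-d + e * U t - f * V t)) (Set.Ici 0) t) :
    Tendsto U atTop (nhds ((a * f + c * d) / (b * f + c * e))) ∧
    Tendsto V atTop (nhds ((a * e - b * d) / (b * f + c * e))) := by
  set us := (a * f + c * d) / (b * f + c * e) with hus_def
  set vs := (a * e - b * d) / (b * f + c * e) with hvs_def
  have hDpos : 0 < b * f + c * e := by positivity
  have hus : 0 < us := by
    apply div_pos (by positivity) hDpos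
  have hvs : 0 < vs := by
    apply div_pos (by linarith) hDpos
  have ha' : a = b * us + c * vs := by
    rw [hus_def, hvs_def]; field_simp; ring
  have hd' : d = e * us - f * vs := by
    rw [hus_def, hvs_def]; field_simp; ring
  -- continuity
  have hUc : ContinuousOn U (Set.Ici 0) := lv_aux_cont hdU
  have hVc : ContinuousOn V (Set.Ici 0) := lv_aux_cont hdV
  -- positivity
  have hUpos : ∀ t, 0 ≤ t → 0 < U t := by
    apply lv_pos (g := fun t => a - b * U t - c * V t) _ hdU hU0
    exact (continuousOn_const.sub (continuousOn_const.mul hUc)).sub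
      (continuousOn_const.mul hVc)
  have hVpos : ∀ t, 0 ≤ t → 0 < V t := by
    apply lv_pos (g := fun t => -d + e * U t - f * V t) _ hdV hV0
    exact (continuousOn_const.add (continuousOn_const.mul hUc)).sub
      (continuousOn_const.mul hVc)
  -- upper bounds
  set MU := max (U 0) (a / b) with hMU_def
  have hMUpos : 0 < MU := lt_of_lt_of_le hU0 (le_max_left _ _)
  have hMU : ∀ t, 0 ≤ t → U t ≤ MU := by
    apply lv_bdd hdU (le_max_left _ _)
    intro t ht hgt
    have hU : 0 < U t := hUpos t ht.le
    have hV : 0 < V t := hVpos t ht.le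
    have hab : a / b ≤ MU := le_max_right _ _
    have : a < b * U t := by
      rw [div_le_iff₀ hb] at hab
      nlinarith
    have : a - b * U t - c * V t < 0 := by nlinarith
    exact mul_neg_of_pos_of_neg hU this
  set MV := max (V 0) (e * MU / f) with hMV_def
  have hMVpos : 0 < MV := lt_of_lt_of_le hV0 (le_max_left _ _)
  have hMV : ∀ t, 0 ≤ t → V t ≤ MV := by
    apply lv_bdd hdV (le_max_left _ _)
    intro t ht hgt
    have hU : 0 < U t := hUpos t ht.le
    have hV : 0 < V t := hVpos t ht.le
    have hab : e * MU / f ≤ MV := le_max_right _ _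
    have h1 : e * MU < f * V t := by
      rw [div_le_iff₀ hf] at hab
      nlinarith
    have h2 : U t ≤ MU := hMU t ht.le
    have : -d + e * U t - f * V t < 0 := by nlinarith
    exact mul_neg_of_pos_of_neg hV this
  -- Lyapunov function
  set W : ℝ → ℝ := fun t => e * (U t - us * Real.log (U t)) + c * (V t - vs * Real.log (V t))
    with hW_def
  set q : ℝ → ℝ := fun t => e * b * (U t - us) ^ 2 + c * f * (V t - vs) ^ 2 with hq_def
  have hqnn : ∀ t, 0 ≤ t → 0 ≤ q t := by
    intro t ht; rw [hq_def]; positivity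
  have hW : ∀ t, 0 ≤ t → HasDerivWithinAt W (-(q t)) (Set.Ici 0) t := by
    intro t ht
    have hU : 0 < U t := hUpos t ht
    have hV : 0 < V t := hVpos t ht
    have hlogU : HasDerivWithinAt (fun s => Real.log (U s))
        ((U t)⁻¹ * (U t * (a - b * U t - c * V t))) (Set.Ici 0) t :=
      (Real.hasDerivAt_log hU.ne').comp_hasDerivWithinAt t (hdU t ht)
    have hlogV : HasDerivWithinAt (fun s => Real.log (V s))
        ((V t)⁻¹ * (V t * (-d + e * U t - f * V t))) (Set.Ici 0) t :=
      (Real.hasDerivAt_log hV.ne').comp_hasDerivWithinAt t (hdV t ht)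
    have h1 := (((hdU t ht).sub (hlogU.const_mul us)).const_mul e).add
      (((hdV t ht).sub (hlogV.const_mul vs)).const_mul c)
    refine h1.congr_deriv ?_
    show _ = -(e * b * (U t - us) ^ 2 + c * f * (V t - vs) ^ 2)
    rw [inv_mul_cancel_left₀ hU.ne', inv_mul_cancel_left₀ hV.ne', ha', hd']
    ring
  -- W is antitone on [0, ∞)
  have hWanti : ∀ x y, 0 ≤ x → x ≤ y → W y ≤ W x := by
    intro x y hx hxy
    have := lv_mono_aux (F := fun t => -W t) (F' := q) hx hxy
      (fun t ht => (hW t ht).neg.congr_deriv (neg_neg _))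
      (fun t ht => hqnn t (hx.trans ht.1.le))
    linarith
  -- W bounded below
  have hB : ∀ t, 0 ≤ t → e * (us - us * Real.log us) + c * (vs - vs * Real.log vs) ≤ W t := by
    intro t ht
    rw [hW_def]
    have h1 := lv_log_bound (hUpos t ht) hus
    have h2 := lv_log_bound (hVpos t ht) hvs
    have := mul_le_mul_of_nonneg_left h1 he.le
    have := mul_le_mul_of_nonneg_left h2 hc.le
    dsimp only
    linarith
  obtain ⟨L, hL⟩ := lv_tendsto_of_anti hWanti hB
  -- G and its convergence
  have hG : ∀ t, 0 ≤ t → HasDerivWithinAt (fun s => W 0 - W s) (q t) (Set.Ici 0) t := by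
    intro t ht
    simpa using (hW t ht).const_sub (W 0)
  have hGtend : Tendsto (fun s => W 0 - W s) atTop (𝓝 (W 0 - L)) :=
    tendsto_const_nhds.sub hL
  -- derivative of q and its bound
  set DU : ℝ → ℝ := fun t => U t * (a - b * U t - c * V t) with hDU_def
  set DV : ℝ → ℝ := fun t => V t * (-d + e * U t - f * V t) with hDV_def
  set q' : ℝ → ℝ := fun t => e * b * (2 * (U t - us) * DU t) + c * f * (2 * (V t - vs) * DV t)
    with hq'_def
  have hq : ∀ t, 0 ≤ t → HasDerivWithinAt q (q' t) (Set.Ici 0) t := by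
    intro t ht
    have h1 : HasDerivWithinAt (fun s => (U s - us) ^ 2)
        (2 * (U t - us) * DU t) (Set.Ici 0) t := by
      have := ((hdU t ht).sub_const us).pow 2
      exact this.congr_deriv (show _ = 2 * (U t - us) * (U t * (a - b * U t - c * V t)) by norm_num)
    have h2 : HasDerivWithinAt (fun s => (V s - vs) ^ 2)
        (2 * (V t - vs) * DV t) (Set.Ici 0) t := by
      have := ((hdV t ht).sub_const vs).pow 2
      exact this.congr_deriv (show _ = 2 * (V t - vs) * (V t * (-d + e * U t - f * V t)) by norm_num)
    exact (h1.const_mul (e * b)).add (h2.const_mul (c * f))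
  set CU := MU * (a + b * MU + c * MV) with hCU_def
  set CV := MV * (d + e * MU + f * MV) with hCV_def
  have hK : ∀ t, 0 ≤ t →
      |q' t| ≤ e * b * (2 * (MU + us) * CU) + c * f * (2 * (MV + vs) * CV) := by
    intro t ht
    have hU : 0 < U t := hUpos t ht
    have hV : 0 < V t := hVpos t ht
    have hUle : U t ≤ MU := hMU t ht
    have hVle : V t ≤ MV := hMV t ht
    have hb1 : |U t - us| ≤ MU + us := abs_le.2 ⟨by linarith, by linarith⟩
    have hb2 : |V t - vs| ≤ MV + vs := abs_le.2 ⟨by linarith, by linarith⟩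
    have p1 : b * U t ≤ b * MU := mul_le_mul_of_nonneg_left hUle hb.le
    have p2 : c * V t ≤ c * MV := mul_le_mul_of_nonneg_left hVle hc.le
    have p3 : e * U t ≤ e * MU := mul_le_mul_of_nonneg_left hUle he.le
    have p4 : f * V t ≤ f * MV := mul_le_mul_of_nonneg_left hVle hf.le
    have q1 : 0 < b * U t := mul_pos hb hU
    have q2 : 0 < c * V t := mul_pos hc hV
    have q3 : 0 < e * U t := mul_pos he hU
    have q4 : 0 < f * V t := mul_pos hf hV
    have hb3 : |DU t| ≤ CU := by
      rw [hDU_def, hCU_def, abs_mul, abs_of_pos hU]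
      have : |a - b * U t - c * V t| ≤ a + b * MU + c * MV :=
        abs_le.2 ⟨by linarith, by linarith⟩
      exact mul_le_mul hUle this (abs_nonneg _) hMUpos.le
    have hb4 : |DV t| ≤ CV := by
      rw [hDV_def, hCV_def, abs_mul, abs_of_pos hV]
      have : |-d + e * U t - f * V t| ≤ d + e * MU + f * MV :=
        abs_le.2 ⟨by linarith, by linarith⟩
      exact mul_le_mul hVle this (abs_nonneg _) hMVpos.le
    have h1 : |U t - us| * |DU t| ≤ (MU + us) * CU :=
      mul_le_mul hb1 hb3 (abs_nonneg _) (by positivity)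
    have h2 : |V t - vs| * |DV t| ≤ (MV + vs) * CV :=
      mul_le_mul hb2 hb4 (abs_nonneg _) (by positivity)
    calc |q' t| ≤ |e * b * (2 * (U t - us) * DU t)| + |c * f * (2 * (V t - vs) * DV t)| :=
          abs_add_le _ _
      _ = e * b * 2 * (|U t - us| * |DU t|) + c * f * 2 * (|V t - vs| * |DV t|) := by
          simp only [abs_mul, abs_two, abs_of_pos he, abs_of_pos hb, abs_of_pos hc,
            abs_of_pos hf]
          ring
      _ ≤ e * b * 2 * ((MU + us) * CU) + c * f * 2 * ((MV + vs) * CV) :=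
          add_le_add (mul_le_mul_of_nonneg_left h1 (by positivity))
            (mul_le_mul_of_nonneg_left h2 (by positivity))
      _ = e * b * (2 * (MU + us) * CU) + c * f * (2 * (MV + vs) * CV) := by ring
  -- Barbalat
  have hqzero : Tendsto q atTop (𝓝 0) := lv_barbalat hq hqnn hK hG hGtend
  -- extract the two limits
  have hU2' : Tendsto (fun t => e * b * (U t - us) ^ 2) atTop (𝓝 0) := by
    apply squeeze_zero' (Eventually.mono (eventually_ge_atTop 0) (fun t ht => by positivity))
      (Eventually.mono (eventually_ge_atTop 0) (fun t ht => ?_)) hqzero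
    have h0 : 0 ≤ c * f * (V t - vs) ^ 2 := by positivity
    simp only [hq_def]
    linarith
  have hV2' : Tendsto (fun t => c * f * (V t - vs) ^ 2) atTop (𝓝 0) := by
    apply squeeze_zero' (Eventually.mono (eventually_ge_atTop 0) (fun t ht => by positivity))
      (Eventually.mono (eventually_ge_atTop 0) (fun t ht => ?_)) hqzero
    have h0 : 0 ≤ e * b * (U t - us) ^ 2 := by positivity
    simp only [hq_def]
    linarith
  have heb : e * b ≠ 0 := by positivity
  have hcf : c * f ≠ 0 := by positivity
  have hU2 : Tendsto (fun t => (U t - us) ^ 2) atTop (𝓝 0) := by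
    have h := hU2'.const_mul (e * b)⁻¹
    rw [mul_zero] at h
    have heq : (fun t => (e * b)⁻¹ * (e * b * (U t - us) ^ 2)) = fun t => (U t - us) ^ 2 := by
      funext t; rw [← mul_assoc, inv_mul_cancel₀ heb, one_mul]
    rwa [heq] at h
  have hV2 : Tendsto (fun t => (V t - vs) ^ 2) atTop (𝓝 0) := by
    have h := hV2'.const_mul (c * f)⁻¹
    rw [mul_zero] at h
    have heq : (fun t => (c * f)⁻¹ * (c * f * (V t - vs) ^ 2)) = fun t => (V t - vs) ^ 2 := by
      funext t; rw [← mul_assoc, inv_mul_cancel₀ hcf, one_mul]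
    rwa [heq] at h
  constructor
  · rw [tendsto_iff_dist_tendsto_zero]
    have := hU2.sqrt
    simp only [Real.sqrt_sq_eq_abs, Real.sqrt_zero] at this
    simpa [Real.dist_eq] using this
  · rw [tendsto_iff_dist_tendsto_zero]
    have := hV2.sqrt
    simp only [Real.sqrt_sq_eq_abs, Real.sqrt_zero] at this
    simpa [Real.dist_eq] using this
end

section
/- Let a, b, c, d, e, f be positive real constants with a·e < b·d. Let U, V : [0,∞) → ℝ be differentiable with U(0) > 0, V(0) > 0, and U′(t) = U(t)(a − b·U(t) − c·V(t)), V′(t) = V(t)(−d + e·U(t) − f·V(t)) for all t ≥ 0. Then V(t) → 0 and U(t) → a/b as t → ∞. -/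
open Filter Set

/-- Monotone on `Icc s T ⊆ Ici 0` from nonnegative derivative on the interior. -/
private lemma LV.monoOn (X X' : ℝ → ℝ) (s T : ℝ) (hs : 0 ≤ s)
    (hcont : ContinuousOn X (Ici 0))
    (hder : ∀ t, 0 < t → HasDerivAt X (X' t) t)
    (hsign : ∀ t, t ∈ Ioo s T → 0 ≤ X' t) : MonotoneOn X (Icc s T) := by
  apply monotoneOn_of_deriv_nonneg (convex_Icc s T) (hcont.mono ((fun x hx => le_trans hs hx.1)))
  · intro t ht
    rw [interior_Icc] at ht
    exact ((hder t (lt_of_le_of_lt hs ht.1)).differentiableAt).differentiableWithinAt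
  · intro t ht
    rw [interior_Icc] at ht
    rw [(hder t (lt_of_le_of_lt hs ht.1)).deriv]
    exact hsign t ht

private lemma LV.antiOn (X X' : ℝ → ℝ) (s T : ℝ) (hs : 0 ≤ s)
    (hcont : ContinuousOn X (Ici 0))
    (hder : ∀ t, 0 < t → HasDerivAt X (X' t) t)
    (hsign : ∀ t, t ∈ Ioo s T → X' t ≤ 0) : AntitoneOn X (Icc s T) := by
  apply antitoneOn_of_deriv_nonpos (convex_Icc s T) (hcont.mono ((fun x hx => le_trans hs hx.1)))
  · intro t ht
    rw [interior_Icc] at ht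
    exact ((hder t (lt_of_le_of_lt hs ht.1)).differentiableAt).differentiableWithinAt
  · intro t ht
    rw [interior_Icc] at ht
    rw [(hder t (lt_of_le_of_lt hs ht.1)).deriv]
    exact hsign t ht

/-- Barrier lemma: once below `M`, stay below `M` if the derivative is `≤ 0` whenever `M ≤ X`. -/
private lemma LV.stayLe (X X' : ℝ → ℝ) (M t0 : ℝ) (ht0 : 0 ≤ t0)
    (hcont : ContinuousOn X (Ici 0))
    (hder : ∀ t, 0 < t → HasDerivAt X (X' t) t)
    (hsign : ∀ t, t0 ≤ t → M ≤ X t → X' t ≤ 0)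
    (hinit : X t0 ≤ M) : ∀ t, t0 ≤ t → X t ≤ M := by
  intro t1 ht1
  by_contra hgt
  push_neg at hgt
  have ht01 : t0 < t1 := by
    rcases eq_or_lt_of_le ht1 with h | h
    · exact absurd (h ▸ hinit) (not_le.mpr hgt)
    · exact h
  set S : Set ℝ := {t ∈ Icc t0 t1 | X t ≤ M} with hS
  have hSne : S.Nonempty := ⟨t0, ⟨le_rfl, ht01.le⟩, hinit⟩
  have hSbdd : BddAbove S := ⟨t1, fun x hx => hx.1.2⟩
  have hSclosed : IsClosed S := by
    have : S = Icc t0 t1 ∩ X ⁻¹' (Iic M) := by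
      ext x; simp [hS, Set.mem_setOf_eq, and_comm]
    rw [this]
    exact ContinuousOn.preimage_isClosed_of_isClosed
      (hcont.mono ((fun x hx => le_trans ht0 hx.1))) isClosed_Icc isClosed_Iic
  have hsmem : sSup S ∈ S := hSclosed.csSup_mem hSne hSbdd
  set s := sSup S
  have hst0 : t0 ≤ s := hsmem.1.1
  have hst1 : s ≤ t1 := hsmem.1.2
  have hXs : X s ≤ M := hsmem.2
  have hslt : s < t1 := by
    rcases eq_or_lt_of_le hst1 with h | h
    · exact absurd (h ▸ hXs) (not_le.mpr hgt)
    · exact h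
  have hanti : AntitoneOn X (Icc s t1) := by
    apply LV.antiOn X X' s t1 (ht0.trans hst0) hcont hder
    intro t ht
    apply hsign t (hst0.trans ht.1.le)
    by_contra hlt
    push_neg at hlt
    have : t ∈ S := ⟨⟨hst0.trans ht.1.le, ht.2.le⟩, hlt.le⟩
    exact absurd (le_csSup hSbdd this) (not_le.mpr ht.1)
  have := hanti (left_mem_Icc.mpr hslt.le) (right_mem_Icc.mpr hslt.le) hslt.le
  linarith

/-- Linear growth: if the derivative is bounded below by `γ > 0` after `t0`, `X` is unbounded. -/
private lemma LV.unbounded (X X' : ℝ → ℝ) (t0 γ : ℝ) (ht0 : 0 ≤ t0) (hγ : 0 < γ)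
    (hcont : ContinuousOn X (Ici 0))
    (hder : ∀ t, 0 < t → HasDerivAt X (X' t) t)
    (hrate : ∀ t, t0 < t → γ ≤ X' t) :
    ∀ C, ∃ t, t0 ≤ t ∧ C ≤ X t := by
  intro C
  set T := t0 + max 1 ((C - X t0) / γ) with hT
  have hmax1 : (1:ℝ) ≤ max 1 ((C - X t0) / γ) := le_max_left _ _
  have hT0 : t0 < T := by simp only [hT]; linarith
  have hmono : MonotoneOn (fun t => X t - γ * t) (Icc t0 T) := by
    apply LV.monoOn _ (fun t => X' t - γ) t0 T ht0
    · exact hcont.sub (continuous_const.mul continuous_id).continuousOn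
    · intro t ht
      exact ((hder t ht).sub ((hasDerivAt_id t).const_mul γ)).congr_deriv (by ring)
    · intro t ht
      have := hrate t ht.1
      linarith
  have h1 := hmono (left_mem_Icc.mpr hT0.le) (right_mem_Icc.mpr hT0.le) hT0.le
  have h2 : C - X t0 ≤ γ * max 1 ((C - X t0) / γ) := by
    rcases le_total ((C - X t0) / γ) 1 with h | h
    · have : C - X t0 ≤ γ := by
        rw [div_le_one hγ] at h; linarith
      calc C - X t0 ≤ γ * 1 := by linarith
        _ ≤ γ * max 1 ((C - X t0) / γ) := by
            exact mul_le_mul_of_nonneg_left hmax1 hγ.le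
    · have hmax : max 1 ((C - X t0) / γ) = (C - X t0) / γ := max_eq_right h
      rw [hmax, mul_div_cancel₀ _ hγ.ne']
  refine ⟨T, hT0.le, ?_⟩
  simp only [hT] at h1 ⊢
  nlinarith [h2]

/-- Positivity: a solution of `X' = X * r` with `X 0 > 0` stays positive. -/
private lemma LV.pos (X r : ℝ → ℝ) (hX0 : 0 < X 0)
    (hcX : ContinuousOn X (Ici 0)) (hcr : ContinuousOn r (Ici 0))
    (hder : ∀ t, 0 < t → HasDerivAt X (X t * r t) t) :
    ∀ t, 0 ≤ t → 0 < X t := by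
  have hne : ∀ t, 0 ≤ t → X t ≠ 0 := by
    intro t0 ht0 hz
    have ht0' : 0 < t0 := by
      rcases eq_or_lt_of_le ht0 with h | h
      · rw [← h] at hz; exact absurd hz hX0.ne'
      · exact h
    obtain ⟨K, hK⟩ : ∃ K, ∀ s ∈ Icc (0:ℝ) t0, ‖r s‖ ≤ K :=
      isCompact_Icc.exists_bound_of_continuousOn (hcr.mono ((fun x hx => hx.1)))
    have hmono : MonotoneOn (fun t => X t ^ 2 * Real.exp (2 * K * t)) (Icc 0 t0) := by
      apply LV.monoOn _
        (fun t => 2 * X t ^ 1 * (X t * r t) * Real.exp (2 * K * t)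
          + X t ^ 2 * (Real.exp (2 * K * t) * (2 * K))) 0 t0 le_rfl
      · exact (hcX.pow 2).mul
          ((Real.continuous_exp.comp (continuous_const.mul continuous_id)).continuousOn)
      · intro t ht
        have hexp : HasDerivAt (fun t => Real.exp (2 * K * t))
            (Real.exp (2 * K * t) * (2 * K)) t := by
          have h1 : HasDerivAt (fun t : ℝ => 2 * K * t) (2 * K) t := by
            simpa using (hasDerivAt_id t).const_mul (2 * K)
          exact h1.exp
        have hX2 : HasDerivAt (fun t => X t ^ 2) (2 * X t ^ 1 * (X t * r t)) t := by
          exact ((hder t ht).pow 2).congr_deriv (by norm_num)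
        exact hX2.mul hexp
      · intro t ht
        have hrK : 0 ≤ r t + K := by
          have := hK t (Ioo_subset_Icc_self ht)
          rw [Real.norm_eq_abs] at this
          linarith [neg_abs_le (r t)]
        have h1 : 0 ≤ Real.exp (2 * K * t) * (X t ^ 2 * (r t + K)) :=
          mul_nonneg (Real.exp_pos _).le (mul_nonneg (sq_nonneg _) hrK)
        have heq : 2 * X t ^ 1 * (X t * r t) * Real.exp (2 * K * t)
            + X t ^ 2 * (Real.exp (2 * K * t) * (2 * K))
            = 2 * (Real.exp (2 * K * t) * (X t ^ 2 * (r t + K))) := by ring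
        rw [heq]; linarith
    have h0 := hmono (left_mem_Icc.mpr ht0'.le) (right_mem_Icc.mpr ht0'.le) ht0'.le
    simp only [hz] at h0
    have : (0:ℝ) < X 0 ^ 2 * Real.exp (2 * K * 0) :=
      mul_pos (pow_pos hX0 2) (Real.exp_pos _)
    simp at h0
    nlinarith [this]
  intro t ht
  by_contra hle
  push_neg at hle
  have hlt : X t < 0 := lt_of_le_of_ne hle (hne t ht)
  have hmem : (0:ℝ) ∈ Icc (X t) (X 0) := ⟨hlt.le, hX0.le⟩
  have := intermediate_value_Icc' (le_of_lt (lt_of_le_of_ne ht ?_)) (hcX.mono ((fun x hx => hx.1)))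
  · obtain ⟨s, hs, hXs⟩ := this hmem
    exact hne s hs.1 hXs
  · intro h
    rw [← h] at hlt
    exact absurd hlt (not_lt.mpr hX0.le)

/-- Predator extinction and prey convergence to the carrying capacity for the
autonomous Lotka–Volterra predator-prey system when `a e < b d`. -/
theorem lotka_volterra_predator_extinction
    (a b c d e f : ℝ)
    (ha : 0 < a) (hb : 0 < b) (hc : 0 < c) (hd : 0 < d) (he : 0 < e) (hf : 0 < f)
    (hcond : a * e < b * d)
    (U V : ℝ → ℝ) (hU0 : 0 < U 0) (hV0 : 0 < V 0)
    (hdU : ∀ t, 0 ≤ t →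
      HasDerivWithinAt U (U t * (a - b * U t - c * V t)) (Set.Ici 0) t)
    (hdV : ∀ t, 0 ≤ t →
      HasDerivWithinAt V (V t * (-d + e * U t - f * V t)) (Set.Ici 0) t) :
    Tendsto V atTop (nhds 0) ∧ Tendsto U atTop (nhds (a / b)) := by
  have hUc : ContinuousOn U (Ici 0) := fun t ht => (hdU t ht).continuousWithinAt
  have hVc : ContinuousOn V (Ici 0) := fun t ht => (hdV t ht).continuousWithinAt
  have hU' : ∀ t, 0 < t → HasDerivAt U (U t * (a - b * U t - c * V t)) t :=
    fun t ht => (hdU t ht.le).hasDerivAt (Ici_mem_nhds ht)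
  have hV' : ∀ t, 0 < t → HasDerivAt V (V t * (-d + e * U t - f * V t)) t :=
    fun t ht => (hdV t ht.le).hasDerivAt (Ici_mem_nhds ht)
  have hUpos : ∀ t, 0 ≤ t → 0 < U t :=
    LV.pos U (fun t => a - b * U t - c * V t) hU0 hUc
      ((continuousOn_const.sub (continuousOn_const.mul hUc)).sub
        (continuousOn_const.mul hVc)) hU'
  have hVpos : ∀ t, 0 ≤ t → 0 < V t :=
    LV.pos V (fun t => -d + e * U t - f * V t) hV0 hVc
      ((continuousOn_const.add (continuousOn_const.mul hUc)).sub
        (continuousOn_const.mul hVc)) hV'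
  have hab : b * (a / b) = a := by field_simp
  -- eventually U ≤ a/b + ε
  have key : ∀ ε, 0 < ε → ∃ t1, 0 ≤ t1 ∧ ∀ t, t1 ≤ t → U t ≤ a / b + ε := by
    intro ε hε
    have hcross : ∃ t1, 0 ≤ t1 ∧ U t1 ≤ a / b + ε := by
      by_contra hcon
      push_neg at hcon
      obtain ⟨t, ht, hle⟩ := LV.unbounded (fun t => -U t)
        (fun t => -(U t * (a - b * U t - c * V t))) 0 (a * ε) le_rfl
        (by positivity) hUc.neg (fun t ht => (hU' t ht).neg)
        (by
          intro t ht
          have h1 := hcon t ht.le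
          have h2 := hVpos t ht.le
          have h4 : a + b * ε ≤ b * U t := by
            nlinarith [mul_lt_mul_of_pos_left h1 hb]
          have h5 : (0:ℝ) ≤ c * V t := mul_nonneg hc.le h2.le
          have h6 : 0 < a / b := div_pos ha hb
          have hder : a * ε ≤ U t * (b * U t + c * V t - a) := by
            calc a * ε = a / b * (b * ε) := by field_simp
              _ ≤ a / b * (b * U t + c * V t - a) := by
                  apply mul_le_mul_of_nonneg_left _ h6.le
                  linarith
              _ ≤ U t * (b * U t + c * V t - a) := by
                  apply mul_le_mul_of_nonneg_right _ (by nlinarith)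
                  linarith
          show a * ε ≤ -(U t * (a - b * U t - c * V t))
          nlinarith [hder]) 0
      exact absurd (hUpos t ht) (by linarith)
    obtain ⟨t1, ht1, hU1⟩ := hcross
    refine ⟨t1, ht1, LV.stayLe U _ (a / b + ε) t1 ht1 hUc hU' ?_ hU1⟩
    intro t ht hMt
    have h2 := hVpos t (ht1.trans ht)
    have h3 := hUpos t (ht1.trans ht)
    have h4 : a ≤ b * U t := by
      nlinarith [mul_le_mul_of_nonneg_left hMt hb.le]
    have h5 : (0:ℝ) ≤ c * V t := mul_nonneg hc.le h2.le
    exact mul_nonpos_of_nonneg_of_nonpos h3.le (by linarith)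
  -- V → 0
  have hδ : 0 < (d - e * (a / b)) / 2 := by
    have : e * (a / b) < d := by
      rw [mul_div_assoc', div_lt_iff₀ hb]
      nlinarith
    linarith
  set δ := (d - e * (a / b)) / 2 with hδdef
  obtain ⟨t1, ht1, hUbd⟩ := key (δ / e) (div_pos hδ he)
  have hVrate : ∀ t, t1 ≤ t → V t * (-d + e * U t - f * V t) ≤ -δ * V t := by
    intro t ht
    have h1 := hUbd t ht
    have h2 := hVpos t (ht1.trans ht)
    have h3 : e * U t ≤ e * (a / b) + δ := by
      have := mul_le_mul_of_nonneg_left h1 he.le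
      rw [mul_add, mul_div_cancel₀ _ he.ne'] at this
      linarith
    have h4 : -d + e * U t - f * V t ≤ -δ := by
      have h5 : 0 < f * V t := mul_pos hf h2
      rw [hδdef] at *
      linarith
    calc V t * (-d + e * U t - f * V t) ≤ V t * (-δ) :=
          mul_le_mul_of_nonneg_left h4 h2.le
      _ = -δ * V t := by ring
  have hVbound : ∀ t, t1 ≤ t →
      V t * Real.exp (δ * t) ≤ V t1 * Real.exp (δ * t1) := by
    intro T hT
    have hexp : ∀ t : ℝ, HasDerivAt (fun t => Real.exp (δ * t))
        (Real.exp (δ * t) * δ) t := by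
      intro t
      have h1 : HasDerivAt (fun t : ℝ => δ * t) δ t := by
        simpa using (hasDerivAt_id t).const_mul δ
      exact h1.exp
    have hanti : AntitoneOn (fun t => V t * Real.exp (δ * t)) (Icc t1 T) := by
      apply LV.antiOn _ (fun t => V t * (-d + e * U t - f * V t) * Real.exp (δ * t)
        + V t * (Real.exp (δ * t) * δ)) t1 T ht1
      · exact hVc.mul (Real.continuous_exp.comp (continuous_const.mul continuous_id)).continuousOn
      · intro t ht
        exact (hV' t ht).mul (hexp t)
      · intro t ht
        have h1 := hVrate t ht.1.le
        have heq : V t * (-d + e * U t - f * V t) * Real.exp (δ * t)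
            + V t * (Real.exp (δ * t) * δ)
            = Real.exp (δ * t) * (V t * (-d + e * U t - f * V t) + δ * V t) := by ring
        rw [heq]
        exact mul_nonpos_of_nonneg_of_nonpos (Real.exp_pos _).le (by linarith)
    exact hanti (left_mem_Icc.mpr hT) (right_mem_Icc.mpr hT) hT
  have hVtend : Tendsto V atTop (nhds 0) := by
    apply squeeze_zero' (g := fun t => V t1 * Real.exp (δ * t1) * Real.exp (-(δ * t)))
    · filter_upwards [eventually_ge_atTop (0:ℝ)] with t ht
      exact (hVpos t ht).le
    · filter_upwards [eventually_ge_atTop t1] with t ht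
      have h1 := hVbound t ht
      rw [Real.exp_neg, ← div_eq_mul_inv, le_div_iff₀ (Real.exp_pos _)]
      exact h1
    · have h1 : Tendsto (fun t : ℝ => δ * t) atTop atTop :=
        Tendsto.const_mul_atTop hδ tendsto_id
      have h2 : Tendsto (fun t : ℝ => Real.exp (-(δ * t))) atTop (nhds 0) :=
        Real.tendsto_exp_neg_atTop_nhds_zero.comp h1
      simpa using h2.const_mul (V t1 * Real.exp (δ * t1))
  refine ⟨hVtend, ?_⟩
  -- U → a/b
  rw [Metric.tendsto_atTop]
  intro ε hε
  obtain ⟨s1, hs1, hUhigh⟩ := key (ε / 2) (by linarith)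
  have hlow : ∃ s2, 0 ≤ s2 ∧ ∀ t, s2 ≤ t → a / b - ε / 2 ≤ U t := by
    by_cases hθ : a / b - ε / 2 ≤ 0
    · exact ⟨0, le_rfl, fun t ht => le_trans hθ (hUpos t ht).le⟩
    · push_neg at hθ
      set θ := a / b - ε / 2 with hθdef
      have hη : 0 < b * ε / (4 * c) := by positivity
      obtain ⟨N, hN⟩ := (Metric.tendsto_atTop.mp hVtend) (b * ε / (4 * c)) hη
      set t2 := max N 0 with ht2def
      have ht2 : 0 ≤ t2 := le_max_right _ _
      have hVsmall : ∀ t, t2 ≤ t → c * V t ≤ b * ε / 4 := by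
        intro t ht
        have := hN t (le_trans (le_max_left _ _) ht)
        rw [Real.dist_eq, sub_zero] at this
        have h2 : V t ≤ b * ε / (4 * c) := le_trans (le_abs_self _) this.le
        have := mul_le_mul_of_nonneg_left h2 hc.le
        calc c * V t ≤ c * (b * ε / (4 * c)) := this
          _ = b * ε / 4 := by field_simp
      have hrateU : ∀ t, t2 ≤ t → U t ≤ θ → b * ε / 4 ≤ a - b * U t - c * V t := by
        intro t ht hUt
        have h1 := hVsmall t ht
        have h4 : b * U t ≤ a - b * (ε / 2) := by
          have h2 := mul_le_mul_of_nonneg_left hUt hb.le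
          rw [hθdef, mul_sub, hab] at h2
          linarith
        nlinarith [h1, h4, mul_pos hb hε]
      have hcross : ∃ t3, t2 ≤ t3 ∧ θ ≤ U t3 := by
        by_contra hcon
        push_neg at hcon
        have hmonoU : ∀ t, t2 ≤ t → U t2 ≤ U t := by
          intro T hT
          have : MonotoneOn U (Icc t2 T) := by
            apply LV.monoOn U _ t2 T ht2 hUc hU'
            intro t ht
            have h1 := hrateU t ht.1.le (hcon t ht.1.le).le
            have h2 := hUpos t (ht2.trans ht.1.le)
            exact mul_nonneg h2.le (le_trans (by positivity) h1)
          exact this (left_mem_Icc.mpr hT) (right_mem_Icc.mpr hT) hT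
        have hγ : 0 < b * ε / 4 * U t2 := by
          have := hUpos t2 ht2
          positivity
        obtain ⟨t, ht, hle⟩ := LV.unbounded U (fun t => U t * (a - b * U t - c * V t))
          t2 (b * ε / 4 * U t2) ht2 hγ hUc hU'
          (by
            intro t ht
            have h1 := hrateU t ht.le (hcon t ht.le).le
            have h2 := hmonoU t ht.le
            have h3 := hUpos t2 ht2
            nlinarith [mul_le_mul h2 h1 (by positivity) (by linarith : (0:ℝ) ≤ U t)]) θ
        exact absurd hle (not_le.mpr (hcon t ht))
      obtain ⟨t3, ht3, hUt3⟩ := hcross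
      refine ⟨t3, ht2.trans ht3, ?_⟩
      have hstay : ∀ t, t3 ≤ t → -U t ≤ -θ := by
        apply LV.stayLe (fun t => -U t) (fun t => -(U t * (a - b * U t - c * V t)))
          (-θ) t3 (ht2.trans ht3) hUc.neg (fun t ht => (hU' t ht).neg)
        · intro t ht hMt
          have h1 := hrateU t (ht3.trans ht) (by linarith)
          have h2 := hUpos t ((ht2.trans ht3).trans ht)
          have := mul_nonneg h2.le (le_trans (by positivity : (0:ℝ) ≤ b * ε / 4) h1)
          linarith
        · linarith
      intro t ht
      have := hstay t ht
      linarith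
  obtain ⟨s2, hs2, hUlow⟩ := hlow
  refine ⟨max s1 s2, ?_⟩
  intro t ht
  have h1 := hUhigh t (le_trans (le_max_left _ _) ht)
  have h2 := hUlow t (le_trans (le_max_right _ _) ht)
  rw [Real.dist_eq, abs_lt]
  constructor <;> linarith
end

section
/- Let a, b, c be positive real constants and let w : [0,∞) → ℝ be continuous with w(t) ≥ 0 for all t ≥ 0 and w(t) → 0 as t → ∞. Let u : [0,∞) → ℝ be differentiable with u(0) > 0 and u′(t) = u(t)(a − b·u(t) − c·w(t)) for all t ≥ 0. Then u(t) → a/b as t → ∞. -/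
open Filter
set_option maxHeartbeats 1000000
open Filter Set intervalIntegral MeasureTheory

lemma primitive_hasDerivWithinAt' {f : ℝ → ℝ} (hf : ContinuousOn f (Set.Ici 0)) {t : ℝ}
    (ht : 0 ≤ t) :
    HasDerivWithinAt (fun x => ∫ s in (0:ℝ)..x, f s) (f t) (Set.Ici t) t := by
  refine intervalIntegral.integral_hasDerivWithinAt_right (t := Set.Ioi t) ?_ ?_ ?_
  · exact (hf.mono (by rw [Set.uIcc_of_le ht]; exact Set.Icc_subset_Ici_self)).intervalIntegrable
  · exact ⟨Set.Ioi t, self_mem_nhdsWithin,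
      (hf.mono (fun x hx => ht.trans hx.le)).aestronglyMeasurable measurableSet_Ioi⟩
  · exact (hf t ht).mono (Set.Ioi_subset_Ici_self.trans (Set.Ici_subset_Ici.2 ht))

lemma primitive_continuousOn' {f : ℝ → ℝ} (hf : ContinuousOn f (Set.Ici 0)) {T : ℝ}
    (hT : 0 ≤ T) : ContinuousOn (fun x => ∫ s in (0:ℝ)..x, f s) (Set.Icc 0 T) := by
  have h := intervalIntegral.continuousOn_primitive_interval (f := f) (a := 0) (b := T)
    (μ := volume) ?_
  · rwa [Set.uIcc_of_le hT] at h
  · rw [Set.uIcc_of_le hT]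
    exact (hf.mono Set.Icc_subset_Ici_self).integrableOn_compact isCompact_Icc

lemma primitive_continuousOn_Ici {f : ℝ → ℝ} (hf : ContinuousOn f (Set.Ici 0)) :
    ContinuousOn (fun x => ∫ s in (0:ℝ)..x, f s) (Set.Ici 0) := by
  intro t ht
  have ht0 : (0:ℝ) ≤ t := ht
  have h1 := primitive_continuousOn' hf (by linarith : (0:ℝ) ≤ t + 1) t ⟨ht0, by linarith⟩
  apply h1.mono_of_mem_nhdsWithin
  rw [← Set.Ici_inter_Iic]
  exact Filter.inter_mem self_mem_nhdsWithin
    (mem_nhdsWithin_of_mem_nhds (Iic_mem_nhds (lt_add_one t)))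

lemma constOn_of_derivWithin_zero' {f : ℝ → ℝ}
    (hc : ∀ T, 0 ≤ T → ContinuousOn f (Set.Icc 0 T))
    (hd : ∀ t, 0 ≤ t → HasDerivWithinAt f 0 (Set.Ici t) t) {t : ℝ} (ht : 0 ≤ t) :
    f t = f 0 :=
  constant_of_has_deriv_right_zero (hc t ht) (fun x hx => hd x hx.1) t ⟨ht, le_rfl⟩

lemma integral_exp_lin (k K t s0 : ℝ) (hk : 0 < k) :
    ∫ s in s0..t, Real.exp (K + k * (s - t)) =
      (Real.exp K - Real.exp (K + k * (s0 - t))) / k := by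
  have h : ∀ x ∈ Set.uIcc s0 t, HasDerivAt (fun s => Real.exp (K + k * (s - t)) / k)
      (Real.exp (K + k * (x - t))) x := by
    intro x _
    have h1 : HasDerivAt (fun s : ℝ => K + k * (s - t)) k x := by
      simpa using (((hasDerivAt_id x).sub_const t).const_mul k).const_add K
    have h2 := (h1.exp).div_const k
    simpa [mul_div_assoc, mul_div_cancel_right₀ _ hk.ne'] using h2
  rw [intervalIntegral.integral_eq_sub_of_hasDerivAt h
    ((Real.continuous_exp.comp (by continuity)).intervalIntegrable _ _)]
  rw [sub_self, mul_zero, add_zero]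
  ring


/-- The prey equation with vanishing nonnegative predation term:
if `w(t) → 0` then the solution of `u' = u(a - b u - c w(t))` with `u(0) > 0`
converges to `a / b`. -/
theorem prey_with_vanishing_predation
    (a b c : ℝ) (ha : 0 < a) (hb : 0 < b) (hc : 0 < c)
    (w : ℝ → ℝ) (hwc : ContinuousOn w (Set.Ici 0))
    (hw_nn : ∀ t, 0 ≤ t → 0 ≤ w t) (hw_lim : Tendsto w atTop (nhds 0))
    (u : ℝ → ℝ) (hu0 : 0 < u 0)
    (hderiv : ∀ t, 0 ≤ t →
      HasDerivWithinAt u (u t * (a - b * u t - c * w t)) (Set.Ici 0) t) :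
    Tendsto u atTop (nhds (a / b)) := by
  have hu_cont : ContinuousOn u (Set.Ici 0) := fun t ht => (hderiv t ht).continuousWithinAt
  -- Step 1: positivity of u
  set g : ℝ → ℝ := fun s => a - b * u s - c * w s with hg_def
  have hg_cont : ContinuousOn g (Set.Ici 0) :=
    (continuousOn_const.sub (continuousOn_const.mul hu_cont)).sub (continuousOn_const.mul hwc)
  set G : ℝ → ℝ := fun x => ∫ s in (0:ℝ)..x, g s with hG_def
  have hG0 : G 0 = 0 := intervalIntegral.integral_same
  have hphi : ∀ t, 0 ≤ t → u t * Real.exp (-(G t)) = u 0 := by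
    intro t ht
    have key := constOn_of_derivWithin_zero'
      (f := fun t => u t * Real.exp (-(G t))) ?_ ?_ ht
    · simpa [hG0] using key
    · intro T hT
      exact (hu_cont.mono Set.Icc_subset_Ici_self).mul
        (Real.continuous_exp.comp_continuousOn (primitive_continuousOn' hg_cont hT).neg)
    · intro s hs
      have h1 := (hderiv s hs).mono (Set.Ici_subset_Ici.2 hs)
      have h2 := ((primitive_hasDerivWithinAt' hg_cont hs).neg).exp
      have h3 := h1.mul h2
      refine h3.congr_deriv ?_
      simp only [hg_def]
      ring
  have hu_pos : ∀ t, 0 ≤ t → 0 < u t := by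
    intro t ht
    have h := hphi t ht
    nlinarith [Real.exp_pos (-(G t))]
  -- Step 2: explicit formula for v = 1/u
  set v : ℝ → ℝ := fun t => (u t)⁻¹ with hv_def
  have hv0_pos : 0 < v 0 := by simpa [hv_def] using inv_pos.2 hu0
  set f2 : ℝ → ℝ := fun s => a - c * w s with hf2_def
  have hf2_cont : ContinuousOn f2 (Set.Ici 0) :=
    continuousOn_const.sub (continuousOn_const.mul hwc)
  set A : ℝ → ℝ := fun x => ∫ s in (0:ℝ)..x, f2 s with hA_def
  have hA0 : A 0 = 0 := intervalIntegral.integral_same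
  have hA_cont : ContinuousOn A (Set.Ici 0) := primitive_continuousOn_Ici hf2_cont
  have hEA_cont : ContinuousOn (fun s => Real.exp (A s)) (Set.Ici 0) :=
    Real.continuous_exp.comp_continuousOn hA_cont
  set B : ℝ → ℝ := fun x => ∫ s in (0:ℝ)..x, Real.exp (A s) with hB_def
  have hB0 : B 0 = 0 := intervalIntegral.integral_same
  have hform : ∀ t, 0 ≤ t → v t * Real.exp (A t) = v 0 + b * B t := by
    intro t ht
    have key := constOn_of_derivWithin_zero'
      (f := fun t => v t * Real.exp (A t) - b * B t) ?_ ?_ ht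
    · simp only [hA0, hB0, Real.exp_zero, mul_one, mul_zero, sub_zero] at key
      linarith
    · intro T hT
      refine ContinuousOn.sub ?_ (continuousOn_const.mul ?_)
      · exact ((hu_cont.mono Set.Icc_subset_Ici_self).inv₀
          (fun x hx => (hu_pos x hx.1).ne')).mul
          (hEA_cont.mono Set.Icc_subset_Ici_self)
      · exact primitive_continuousOn' hEA_cont hT
    · intro s hs
      have hus : u s ≠ 0 := (hu_pos s hs).ne'
      have h1 : HasDerivWithinAt v
          (-(u s * (a - b * u s - c * w s)) / (u s) ^ 2) (Set.Ici s) s :=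
        ((hderiv s hs).mono (Set.Ici_subset_Ici.2 hs)).inv hus
      have h2 := (primitive_hasDerivWithinAt' hf2_cont hs).exp
      have h3 := primitive_hasDerivWithinAt' hEA_cont hs
      have h4 := (h1.mul h2).sub (h3.const_mul b)
      refine h4.congr_deriv ?_
      simp only [hf2_def, hv_def]
      field_simp
      ring
  have hform' : ∀ t, 0 ≤ t → v t = (v 0 + b * B t) * Real.exp (-(A t)) := by
    intro t ht
    rw [← hform t ht, Real.exp_neg, mul_assoc, mul_inv_cancel₀ (Real.exp_pos _).ne', mul_one]
  -- Step 3: integral estimates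
  have hii : ∀ (f : ℝ → ℝ), ContinuousOn f (Set.Ici 0) → ∀ s t : ℝ, 0 ≤ s → s ≤ t →
      IntervalIntegrable f MeasureTheory.volume s t := by
    intro f hf s t hs hst
    exact (hf.mono (by rw [Set.uIcc_of_le hst]; exact fun x hx => hs.trans hx.1)).intervalIntegrable
  have hA_sub : ∀ s t : ℝ, 0 ≤ s → s ≤ t → A t - A s = ∫ r in s..t, f2 r := by
    intro s t hs hst
    have h := intervalIntegral.integral_add_adjacent_intervals
      (hii f2 hf2_cont 0 s le_rfl hs) (hii f2 hf2_cont s t hs hst)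
    simp only [hA_def]
    linarith
  have hA_diff_le : ∀ s t : ℝ, 0 ≤ s → s ≤ t → A t - A s ≤ a * (t - s) := by
    intro s t hs hst
    rw [hA_sub s t hs hst]
    have h1 : (∫ r in s..t, f2 r) ≤ ∫ _r in s..t, a :=
      intervalIntegral.integral_mono_on hst (hii f2 hf2_cont s t hs hst)
        intervalIntegrable_const (fun x hx => by
          have hwx := hw_nn x (hs.trans hx.1)
          simp only [hf2_def]
          nlinarith)
    simpa [smul_eq_mul, mul_comm] using h1
  have hv_lower : ∀ t : ℝ, 0 ≤ t → b * ((1 - Real.exp (-(a * t))) / a) ≤ v t := by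
    intro t ht
    have hBlow : Real.exp (A t) * ((1 - Real.exp (-(a * t))) / a) ≤ B t := by
      have hpt : ∀ x ∈ Set.Icc (0:ℝ) t, Real.exp (A t + a * (x - t)) ≤ Real.exp (A x) := by
        intro x hx
        apply Real.exp_le_exp.2
        have := hA_diff_le x t hx.1 hx.2
        linarith
      have h1 : (∫ x in (0:ℝ)..t, Real.exp (A t + a * (x - t)))
          ≤ ∫ x in (0:ℝ)..t, Real.exp (A x) :=
        intervalIntegral.integral_mono_on ht
          ((Real.continuous_exp.comp (continuous_const.add
            (continuous_const.mul (continuous_id.sub continuous_const)))).intervalIntegrable _ _)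
          (hii _ hEA_cont 0 t le_rfl ht) hpt
      rw [integral_exp_lin a (A t) t 0 ha] at h1
      calc Real.exp (A t) * ((1 - Real.exp (-(a * t))) / a)
          = (Real.exp (A t) - Real.exp (A t + a * (0 - t))) / a := by
            rw [Real.exp_add]; ring
        _ ≤ B t := h1
    rw [hform' t ht]
    have hE := Real.exp_pos (-(A t))
    have h2 : b * (Real.exp (A t) * ((1 - Real.exp (-(a * t))) / a)) ≤ b * B t :=
      mul_le_mul_of_nonneg_left hBlow hb.le
    have h3 : Real.exp (A t) * Real.exp (-(A t)) = 1 := by rw [← Real.exp_add]; simp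
    calc b * ((1 - Real.exp (-(a * t))) / a)
        = b * ((1 - Real.exp (-(a * t))) / a) * (Real.exp (A t) * Real.exp (-(A t))) := by
          rw [h3, mul_one]
      _ = b * (Real.exp (A t) * ((1 - Real.exp (-(a * t))) / a)) * Real.exp (-(A t)) := by
          ring
      _ ≤ b * B t * Real.exp (-(A t)) := mul_le_mul_of_nonneg_right h2 hE.le
      _ ≤ (v 0 + b * B t) * Real.exp (-(A t)) := by nlinarith
  have hlo_tendsto : Tendsto (fun t => b * ((1 - Real.exp (-(a * t))) / a)) atTop
      (nhds (b / a)) := by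
    have h1 : Tendsto (fun t : ℝ => Real.exp (-(a * t))) atTop (nhds 0) := by
      have h0 : Tendsto (fun t : ℝ => a * t) atTop atTop :=
        Tendsto.const_mul_atTop ha tendsto_id
      exact Real.tendsto_exp_neg_atTop_nhds_zero.comp h0
    have h2 := (((tendsto_const_nhds (x := (1:ℝ))).sub h1).div_const a).const_mul b
    convert h2 using 2
    rw [sub_zero, mul_one_div]
  -- Step 4: the limit of v
  have hv_tendsto : Tendsto v atTop (nhds (b / a)) := by
    rw [tendsto_order]
    constructor
    · intro x hx
      have h1 := (tendsto_order.1 hlo_tendsto).1 x hx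
      filter_upwards [h1, eventually_ge_atTop (0:ℝ)] with t h1t h2t
      exact h1t.trans_le (hv_lower t h2t)
    · intro x hx
      set m := (b / a + x) / 2 with hm_def
      have hm1 : b / a < m := by rw [hm_def]; linarith
      have hm2 : m < x := by rw [hm_def]; linarith
      have hm_pos : 0 < m := lt_trans (div_pos hb ha) hm1
      have hbm : b / m < a := by
        rw [div_lt_iff₀ hm_pos]
        rw [div_lt_iff₀ ha] at hm1
        linarith
      set ε := (a - b / m) / 2 with hε_def
      have hε_pos : 0 < ε := by rw [hε_def]; linarith
      have hbm_pos : 0 < b / m := div_pos hb hm_pos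
      have hεa : ε < a := by rw [hε_def]; linarith
      have haε : 0 < a - ε := by linarith
      have hbaε : b / (a - ε) < m := by
        rw [div_lt_iff₀ haε]
        have hkey : b / m * m = b := div_mul_cancel₀ b hm_pos.ne'
        nlinarith
      have hev : ∀ᶠ t in atTop, c * w t < ε := by
        have h0 : Tendsto (fun t => c * w t) atTop (nhds (c * 0)) := hw_lim.const_mul c
        rw [mul_zero] at h0
        exact h0.eventually (eventually_lt_nhds hε_pos)
      obtain ⟨T0, hT0⟩ := eventually_atTop.1 hev
      set T := max T0 0 with hT_def
      have hT_nn : (0:ℝ) ≤ T := le_max_right _ _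
      have hTw : ∀ r, T ≤ r → c * w r ≤ ε := fun r hr =>
        (hT0 r ((le_max_left _ _).trans hr)).le
      have hA_diff_ge : ∀ s t : ℝ, T ≤ s → s ≤ t → (a - ε) * (t - s) ≤ A t - A s := by
        intro s t hs hst
        rw [hA_sub s t (hT_nn.trans hs) hst]
        have h1 : (∫ _r in s..t, (a - ε)) ≤ ∫ r in s..t, f2 r :=
          intervalIntegral.integral_mono_on hst intervalIntegrable_const
            (hii f2 hf2_cont s t (hT_nn.trans hs) hst) (fun x hx => by
              have := hTw x (hs.trans hx.1)
              simp only [hf2_def]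
              linarith)
        rw [intervalIntegral.integral_const, smul_eq_mul, mul_comm] at h1
        exact h1
      have hBT : ∀ t : ℝ, T ≤ t → B t - B T ≤ Real.exp (A t) / (a - ε) := by
        intro t ht
        have ht0 : (0:ℝ) ≤ t := hT_nn.trans ht
        have hBsub : B t - B T = ∫ r in T..t, Real.exp (A r) := by
          have h := intervalIntegral.integral_add_adjacent_intervals
            (hii _ hEA_cont 0 T le_rfl hT_nn) (hii _ hEA_cont T t hT_nn ht)
          simp only [hB_def]
          linarith
        rw [hBsub]
        have h1 : (∫ r in T..t, Real.exp (A r))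
            ≤ ∫ r in T..t, Real.exp (A t + (a - ε) * (r - t)) :=
          intervalIntegral.integral_mono_on ht (hii _ hEA_cont T t hT_nn ht)
            ((Real.continuous_exp.comp (continuous_const.add
              (continuous_const.mul (continuous_id.sub continuous_const)))).intervalIntegrable _ _)
            (fun x hx => Real.exp_le_exp.2 (by
              have := hA_diff_ge x t hx.1 hx.2
              linarith))
        rw [integral_exp_lin (a - ε) (A t) t T haε] at h1
        have h2 := Real.exp_pos (A t + (a - ε) * (T - t))
        calc (∫ r in T..t, Real.exp (A r)) ≤ _ := h1
          _ ≤ Real.exp (A t) / (a - ε) := by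
            gcongr
            linarith
      set C := v 0 + b * B T with hC_def
      have hBT_nn : 0 ≤ B T :=
        intervalIntegral.integral_nonneg hT_nn (fun x _ => (Real.exp_pos _).le)
      have hC_pos : 0 < C := by
        have := mul_nonneg hb.le hBT_nn
        rw [hC_def]
        linarith
      have hup : ∀ t : ℝ, T ≤ t →
          v t ≤ C * (Real.exp (-(A T)) * Real.exp (-((a - ε) * (t - T)))) + b / (a - ε) := by
        intro t ht
        have ht0 : (0:ℝ) ≤ t := hT_nn.trans ht
        rw [hform' t ht0]
        have hE := Real.exp_pos (-(A t))
        have h1 : v 0 + b * B t ≤ C + b * (Real.exp (A t) / (a - ε)) := by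
          have h := mul_le_mul_of_nonneg_left (hBT t ht) hb.le
          rw [hC_def]
          linarith
        have h2 := mul_le_mul_of_nonneg_right h1 hE.le
        have h3 : Real.exp (A t) * Real.exp (-(A t)) = 1 := by rw [← Real.exp_add]; simp
        have h4 : Real.exp (-(A t)) ≤ Real.exp (-(A T)) * Real.exp (-((a - ε) * (t - T))) := by
          rw [← Real.exp_add]
          apply Real.exp_le_exp.2
          have := hA_diff_ge T t le_rfl ht
          linarith
        calc (v 0 + b * B t) * Real.exp (-(A t))
            ≤ (C + b * (Real.exp (A t) / (a - ε))) * Real.exp (-(A t)) := h2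
          _ = C * Real.exp (-(A t)) + b / (a - ε) * (Real.exp (A t) * Real.exp (-(A t))) := by
              ring
          _ = C * Real.exp (-(A t)) + b / (a - ε) := by rw [h3, mul_one]
          _ ≤ C * (Real.exp (-(A T)) * Real.exp (-((a - ε) * (t - T)))) + b / (a - ε) :=
              add_le_add_left (mul_le_mul_of_nonneg_left h4 hC_pos.le) _
      have hup_tendsto : Tendsto
          (fun t => C * (Real.exp (-(A T)) * Real.exp (-((a - ε) * (t - T)))) + b / (a - ε))
          atTop (nhds (b / (a - ε))) := by
        have h0 : Tendsto (fun t : ℝ => (a - ε) * (t - T)) atTop atTop := by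
          apply Tendsto.const_mul_atTop haε
          simpa [sub_eq_add_neg] using tendsto_atTop_add_const_right atTop (-T) tendsto_id
        have h1 : Tendsto (fun t : ℝ => Real.exp (-((a - ε) * (t - T)))) atTop (nhds 0) := by
          exact Real.tendsto_exp_neg_atTop_nhds_zero.comp h0
        have h2 := (((h1.const_mul (Real.exp (-(A T)))).const_mul C).add
          (tendsto_const_nhds (x := b / (a - ε))))
        simpa using h2
      have hfin : ∀ᶠ t in atTop,
          C * (Real.exp (-(A T)) * Real.exp (-((a - ε) * (t - T)))) + b / (a - ε) < x :=
        hup_tendsto.eventually (eventually_lt_nhds (lt_trans hbaε hm2))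
      filter_upwards [hfin, eventually_ge_atTop T] with t h1t h2t
      exact lt_of_le_of_lt (hup t h2t) h1t
  -- Step 5: conclude for u
  have hba : (0:ℝ) < b / a := div_pos hb ha
  have hinv := hv_tendsto.inv₀ hba.ne'
  rw [inv_div] at hinv
  apply Tendsto.congr' ?_ hinv
  filter_upwards [eventually_ge_atTop (0:ℝ)] with t ht
  simp [hv_def]
end
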